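/- arXiv:2312.01390 — 5 statements merged into one kernel-verified Lean document; each statement's English description precedes it below -/
import Mathlib

section
/- Let {Wₙ} be i.i.d. real random variables with E|W₁| < ∞, E W₁ = 0, and ℙ(W₁ ≠ 0) > 0. Then almost surely liminf Sₙ = −∞ and limsup Sₙ = +∞, where Sₙ = W₁ + ⋯ + Wₙ. -/
open MeasureTheory ProbabilityTheory Filter Finset

namespace CF

variable {Ω : Type*}

/-- Partial sums of the walk shifted by `m`. -/
noncomputable def pS (W : ℕ → Ω → ℝ) (m n : ℕ) (ω : Ω) : ℝ := ∑ k ∈ Finset.range n, W (m + k) ω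

/-- Running maximum of partial sums (including the `0` at time `0`). -/
noncomputable def pR (W : ℕ → Ω → ℝ) (m : ℕ) : ℕ → Ω → ℝ
  | 0 => fun _ => 0
  | n + 1 => fun ω => max (pR W m n ω) (pS W m (n + 1) ω)

lemma pS_succ' (W : ℕ → Ω → ℝ) (m n : ℕ) (ω : Ω) :
    pS W m (n + 1) ω = W m ω + pS W (m + 1) n ω := by
  unfold pS
  rw [Finset.sum_range_succ']
  have : ∀ k, W (m + (k + 1)) ω = W (m + 1 + k) ω := fun k => by
    rw [show m + (k + 1) = m + 1 + k by omega]
  simp only [this, Nat.add_zero]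
  ring

lemma pR_zero (W : ℕ → Ω → ℝ) (m : ℕ) (ω : Ω) : pR W m 0 ω = 0 := rfl

lemma pR_succ (W : ℕ → Ω → ℝ) (m n : ℕ) (ω : Ω) :
    pR W m (n + 1) ω = max (pR W m n ω) (pS W m (n + 1) ω) := rfl

lemma pR_nonneg (W : ℕ → Ω → ℝ) (m : ℕ) (ω : Ω) : ∀ n, 0 ≤ pR W m n ω
  | 0 => le_refl 0
  | n + 1 => le_max_of_le_left (pR_nonneg W m ω n)

lemma pR_mono (W : ℕ → Ω → ℝ) (m : ℕ) (ω : Ω) : Monotone (fun n => pR W m n ω) :=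
  monotone_nat_of_le_succ fun n => le_max_left _ _

lemma pR_rec (W : ℕ → Ω → ℝ) (m : ℕ) (ω : Ω) :
    ∀ n, pR W m (n + 1) ω = max 0 (W m ω + pR W (m + 1) n ω)
  | 0 => by
    rw [pR_succ, pR_zero, pS_succ']
    simp [pS, pR_zero]
  | n + 1 => by
    rw [pR_succ, pR_rec W m ω n, pS_succ', pR_succ W (m + 1) n ω]
    rw [max_assoc, ← max_add_add_left]

lemma measurable_pS {mΩ : MeasurableSpace Ω} {W : ℕ → Ω → ℝ} {m : ℕ}
    (h : ∀ i, m ≤ i → Measurable[mΩ] (W i)) {m' : ℕ} (hm' : m ≤ m') (n : ℕ) :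
    Measurable[mΩ] (pS W m' n) :=
  Finset.measurable_sum _ fun k _ => h _ (le_trans hm' (Nat.le_add_right m' k))

lemma measurable_pR {mΩ : MeasurableSpace Ω} {W : ℕ → Ω → ℝ} {m : ℕ}
    (h : ∀ i, m ≤ i → Measurable[mΩ] (W i)) {m' : ℕ} (hm' : m ≤ m') :
    ∀ n, Measurable[mΩ] (pR W m' n)
  | 0 => measurable_const
  | n + 1 => Measurable.max (measurable_pR h hm' n) (measurable_pS h hm' (n + 1))

/-- The σ-algebra generated by `W m, W (m+1), ...`. -/
def tailAlg (W : ℕ → Ω → ℝ) (m : ℕ) : MeasurableSpace Ω :=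
  ⨆ i ∈ {i : ℕ | m ≤ i}, MeasurableSpace.comap (W i) inferInstance

lemma measurable_tailAlg {W : ℕ → Ω → ℝ} {m i : ℕ} (hi : m ≤ i) :
    Measurable[tailAlg W m] (W i) :=
  Measurable.of_comap_le
    (le_iSup₂ (f := fun i (_ : i ∈ {i : ℕ | m ≤ i}) => MeasurableSpace.comap (W i) inferInstance)
      i hi)

lemma tailAlg_le {mΩ : MeasurableSpace Ω} {W : ℕ → Ω → ℝ} (hmeas : ∀ i, Measurable (W i))
    (m : ℕ) : tailAlg W m ≤ mΩ :=
  iSup₂_le fun i _ => (hmeas i).comap_le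

variable {mΩ : MeasurableSpace Ω} {P : Measure Ω} [IsProbabilityMeasure P]

lemma indepFun_tail {W : ℕ → Ω → ℝ} (hmeas : ∀ i, Measurable (W i))
    (hindep : iIndepFun W P) (m : ℕ) {X : Ω → ℝ}
    (hX : Measurable[tailAlg W (m + 1)] X) : IndepFun (W m) X P := by
  rw [IndepFun_iff_Indep]
  have h1 : Indep (⨆ i ∈ ({m} : Set ℕ), MeasurableSpace.comap (W i) inferInstance)
      (⨆ i ∈ ({m} : Set ℕ)ᶜ, MeasurableSpace.comap (W i) inferInstance) P :=
    indep_biSup_compl (fun n => (hmeas n).comap_le) hindep.iIndep {m}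
  have h2 : tailAlg W (m + 1) ≤
      ⨆ i ∈ ({m} : Set ℕ)ᶜ, MeasurableSpace.comap (W i) inferInstance := by
    refine biSup_mono fun i hi => ?_
    simp only [Set.mem_setOf_eq] at hi
    simp only [Set.mem_compl_iff, Set.mem_singleton_iff]
    omega
  have h3 : MeasurableSpace.comap (W m) inferInstance ≤
      ⨆ i ∈ ({m} : Set ℕ), MeasurableSpace.comap (W i) inferInstance :=
    le_iSup₂ (f := fun i (_ : i ∈ ({m} : Set ℕ)) => MeasurableSpace.comap (W i) inferInstance)
      m rfl
  exact indep_of_indep_of_le_right (indep_of_indep_of_le_left h1 h3)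
    (le_trans hX.comap_le h2)

lemma map_pR_eq {W : ℕ → Ω → ℝ} (hmeas : ∀ i, Measurable (W i))
    (hindep : iIndepFun W P)
    (hident : ∀ n, Measure.map (W n) P = Measure.map (W 0) P) :
    ∀ n m, Measure.map (pR W m n) P = Measure.map (pR W 0 n) P := by
  intro n
  induction n with
  | zero => intro m; rfl
  | succ n ih =>
    have key : ∀ m', Measure.map (pR W m' (n + 1)) P =
        Measure.map (fun p : ℝ × ℝ => max 0 (p.1 + p.2))
          ((Measure.map (W 0) P).prod (Measure.map (pR W 0 n) P)) := by
      intro m'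
      have hg : Measurable (fun p : ℝ × ℝ => max 0 (p.1 + p.2)) :=
        measurable_const.max (measurable_fst.add measurable_snd)
      have hR : Measurable (pR W (m' + 1) n) :=
        measurable_pR (fun i _ => hmeas i) (Nat.zero_le _) n
      have hcomp : pR W m' (n + 1) = (fun p : ℝ × ℝ => max 0 (p.1 + p.2)) ∘
          (fun ω => (W m' ω, pR W (m' + 1) n ω)) := funext fun ω => pR_rec W m' ω n
      have hind : IndepFun (W m') (pR W (m' + 1) n) P :=
        indepFun_tail hmeas hindep m'
          (measurable_pR (fun i hi => measurable_tailAlg hi) le_rfl n)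
      rw [hcomp, ← Measure.map_map hg ((hmeas m').prodMk hR),
        (indepFun_iff_map_prod_eq_prod_map_map (hmeas m').aemeasurable hR.aemeasurable).mp hind,
        hident m', ih (m' + 1)]
    intro m
    rw [key m, key 0]

lemma integral_comp_pR_eq {W : ℕ → Ω → ℝ} (hmeas : ∀ i, Measurable (W i))
    (hindep : iIndepFun W P)
    (hident : ∀ n, Measure.map (W n) P = Measure.map (W 0) P)
    {φ : ℝ → ℝ} (hφ : Measurable φ) (n m : ℕ) :
    ∫ ω, φ (pR W m n ω) ∂P = ∫ ω, φ (pR W 0 n ω) ∂P := by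
  have h1 : Measurable (pR W m n) := measurable_pR (fun i _ => hmeas i) (Nat.zero_le _) n
  have h2 : Measurable (pR W 0 n) := measurable_pR (fun i _ => hmeas i) (Nat.zero_le _) n
  rw [← integral_map h1.aemeasurable hφ.aestronglyMeasurable,
    ← integral_map h2.aemeasurable hφ.aestronglyMeasurable,
    map_pR_eq hmeas hindep hident n m]

/-- Truncated all-time supremum of the running maxima. -/
noncomputable def pY (W : ℕ → Ω → ℝ) (K : ℝ) (m : ℕ) (ω : Ω) : ℝ :=
  ⨆ n, min (pR W m n ω) K

lemma pY_bddAbove {W : ℕ → Ω → ℝ} {K : ℝ} {m : ℕ} {ω : Ω} :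
    BddAbove (Set.range fun n => min (pR W m n ω) K) :=
  ⟨K, by rintro x ⟨n, rfl⟩; exact min_le_right _ _⟩

lemma tendsto_pY (W : ℕ → Ω → ℝ) (K : ℝ) (m : ℕ) (ω : Ω) :
    Tendsto (fun n => min (pR W m n ω) K) atTop (nhds (pY W K m ω)) :=
  tendsto_atTop_ciSup
    (fun a b hab => min_le_min (pR_mono W m ω hab) le_rfl) pY_bddAbove

lemma pY_nonneg {W : ℕ → Ω → ℝ} {K : ℝ} (hK : 0 ≤ K) (m : ℕ) (ω : Ω) :
    0 ≤ pY W K m ω := by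
  have h0 : min (pR W m 0 ω) K = 0 := by rw [pR_zero]; exact min_eq_left hK
  calc (0 : ℝ) = min (pR W m 0 ω) K := h0.symm
    _ ≤ pY W K m ω := le_ciSup pY_bddAbove 0

lemma pY_le_K {W : ℕ → Ω → ℝ} {K : ℝ} (m : ℕ) (ω : Ω) (hK : 0 ≤ K) : pY W K m ω ≤ K :=
  ciSup_le fun n => min_le_right _ _

lemma pY_le {W : ℕ → Ω → ℝ} {K C : ℝ} {m : ℕ} {ω : Ω} (h : ∀ n, pR W m n ω ≤ C) :
    pY W K m ω ≤ C :=
  ciSup_le fun n => le_trans (min_le_left _ _) (h n)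

lemma measurable_pY {mΩ' : MeasurableSpace Ω} {W : ℕ → Ω → ℝ} {m : ℕ}
    (h : ∀ i, m ≤ i → Measurable[mΩ'] (W i)) {m' : ℕ} (hm' : m ≤ m') (K : ℝ) :
    Measurable[mΩ'] (pY W K m') := by
  refine measurable_of_tendsto_metrizable
    (f := fun n ω => min (pR W m' n ω) K)
    (fun n => (measurable_pR h hm' n).min measurable_const) ?_
  rw [tendsto_pi_nhds]
  exact fun ω => tendsto_pY W K m' ω

lemma phiK_eq {x K : ℝ} (hK : 0 ≤ K) : min (max x 0) K = min x K - min x 0 := by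
  rcases le_total x 0 with h | h
  · rw [max_eq_right h, min_eq_left hK, min_eq_left (le_trans h hK), min_eq_left h]; ring
  · rw [max_eq_left h, min_eq_right h]; ring

lemma minK_eq {a K : ℝ} : min a K = a - max (a - K) 0 := by
  rcases le_total a K with h | h
  · rw [min_eq_left h, max_eq_right (by linarith)]; ring
  · rw [min_eq_right h, max_eq_left (by linarith)]; ring

/-- Key truncation estimate: the walk from time `1` cannot stay below `-ε` relative to `W 0`. -/
lemma lemA {W : ℕ → Ω → ℝ} (hmeas : ∀ i, Measurable (W i))
    (hindep : iIndepFun W P)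
    (hident : ∀ n, Measure.map (W n) P = Measure.map (W 0) P)
    (hint : Integrable (W 0) P) (hmean : ∫ ω, W 0 ω ∂P = 0)
    (hG : ∀ᵐ ω ∂P, ∃ C, ∀ n, pR W 1 n ω ≤ C) {ε : ℝ} (hε : 0 < ε) :
    P {ω | ∀ n, W 0 ω + pR W 1 n ω ≤ -ε} = 0 := by
  set B := {ω | ∀ n, W 0 ω + pR W 1 n ω ≤ -ε} with hB
  have hmR : ∀ m n, Measurable (pR W m n) :=
    fun m n => measurable_pR (fun i _ => hmeas i) (Nat.zero_le _) n
  have hBmeas : MeasurableSet B := by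
    have : B = ⋂ n, {ω | W 0 ω + pR W 1 n ω ≤ -ε} := by
      ext ω; simp [hB, Set.mem_iInter]
    rw [this]
    exact MeasurableSet.iInter fun n =>
      measurableSet_le ((hmeas 0).add (hmR 1 n)) measurable_const
  -- the remainder terms
  set r : ℕ → ℝ := fun K => ∫ ω, max (W 0 ω + pY W (K : ℝ) 1 ω - (K : ℝ)) 0 ∂P with hr
  have hmY : ∀ (K : ℝ) m, Measurable (pY W K m) :=
    fun K m => measurable_pY (fun i _ => hmeas i) (Nat.zero_le _) K
  have hYint : ∀ (K : ℝ) m, 0 ≤ K → Integrable (pY W K m) P := by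
    intro K m hK
    refine (integrable_const K).mono' (hmY K m).aestronglyMeasurable ?_
    exact Filter.Eventually.of_forall fun ω => by
      rw [Real.norm_eq_abs, abs_of_nonneg (pY_nonneg hK m ω)]
      exact pY_le_K m ω hK
  -- step 1 : ε * P(B) ≤ r K for every K
  have step1 : ∀ K : ℕ, ε * (P B).toReal ≤ r K := by
    intro K
    have hK : (0 : ℝ) ≤ (K : ℝ) := Nat.cast_nonneg K
    set Y := pY W (K : ℝ) 1 with hYdef
    set Y0 := pY W (K : ℝ) 0 with hY0def
    -- equality of expectations of Y and Y0
    have hEY : ∫ ω, Y0 ω ∂P = ∫ ω, Y ω ∂P := by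
      have hlim : ∀ m, Tendsto (fun n => ∫ ω, min (pR W m n ω) (K : ℝ) ∂P) atTop
          (nhds (∫ ω, pY W (K : ℝ) m ω ∂P)) := by
        intro m
        refine tendsto_integral_of_dominated_convergence (fun _ => (K : ℝ))
          (fun n => ((hmR m n).min measurable_const).aestronglyMeasurable)
          (integrable_const _) (fun n => Filter.Eventually.of_forall fun ω => ?_)
          (Filter.Eventually.of_forall fun ω => tendsto_pY W (K : ℝ) m ω)
        rw [Real.norm_eq_abs, abs_of_nonneg (le_min (pR_nonneg W m ω n) hK)]
        exact min_le_right _ _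
      have heq : ∀ n, ∫ ω, min (pR W 1 n ω) (K : ℝ) ∂P
          = ∫ ω, min (pR W 0 n ω) (K : ℝ) ∂P :=
        fun n => integral_comp_pR_eq hmeas hindep hident
          (measurable_id.min measurable_const) n 1
      have h1 := hlim 1
      rw [funext heq] at h1
      exact tendsto_nhds_unique (hlim 0) h1
    -- pointwise inequality
    have hpoint : ∀ ω, min (max (W 0 ω + Y ω) 0) (K : ℝ) ≤ Y0 ω := by
      intro ω
      have h1 : ∀ n, min (max (W 0 ω + min (pR W 1 n ω) (K : ℝ)) 0) (K : ℝ)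
          ≤ min (pR W 0 (n + 1) ω) (K : ℝ) := by
        intro n
        have e : pR W 0 (n + 1) ω = max 0 (W 0 ω + pR W 1 n ω) := pR_rec W 0 ω n
        rw [e]
        have h' : W 0 ω + min (pR W 1 n ω) (K : ℝ) ≤ W 0 ω + pR W 1 n ω :=
          by have := min_le_left (pR W 1 n ω) (K : ℝ); linarith
        refine min_le_min ?_ le_rfl
        rw [max_comm]
        exact max_le_max le_rfl h'
      have h2 : ∀ n, min (max (W 0 ω + min (pR W 1 n ω) (K : ℝ)) 0) (K : ℝ) ≤ Y0 ω :=
        fun n => le_trans (h1 n) (le_ciSup pY_bddAbove (n + 1))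
      have h3 : Tendsto (fun n => min (max (W 0 ω + min (pR W 1 n ω) (K : ℝ)) 0) (K : ℝ))
          atTop (nhds (min (max (W 0 ω + Y ω) 0) (K : ℝ))) :=
        (((tendsto_const_nhds.add (tendsto_pY W (K : ℝ) 1 ω)).max
          tendsto_const_nhds).min tendsto_const_nhds)
      exact le_of_tendsto h3 (Filter.Eventually.of_forall h2)
    -- integrability facts
    have hYI : Integrable Y P := hYint _ 1 hK
    have hY0I : Integrable Y0 P := hYint _ 0 hK
    have haI : Integrable (fun ω => W 0 ω + Y ω) P := hint.add hYI
    have hmaxmeas : Measurable (fun ω => max (W 0 ω + Y ω - (K : ℝ)) 0) :=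
      (((hmeas 0).add (hmY _ 1)).sub measurable_const).max measurable_const
    have hmaxI : Integrable (fun ω => max (W 0 ω + Y ω - (K : ℝ)) 0) P := by
      refine hint.abs.mono' hmaxmeas.aestronglyMeasurable
        (Filter.Eventually.of_forall fun ω => ?_)
      have hy : Y ω ≤ (K : ℝ) := pY_le_K 1 ω hK
      have : max (W 0 ω + Y ω - (K : ℝ)) 0 ≤ |W 0 ω| := by
        apply max_le _ (abs_nonneg _)
        have := le_abs_self (W 0 ω); linarith
      rw [Real.norm_eq_abs, abs_of_nonneg (le_max_right _ _)]
      exact this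
    have hminKI : Integrable (fun ω => min (W 0 ω + Y ω) (K : ℝ)) P := by
      have : (fun ω => min (W 0 ω + Y ω) (K : ℝ))
          = fun ω => (W 0 ω + Y ω) - max (W 0 ω + Y ω - (K : ℝ)) 0 :=
        funext fun ω => minK_eq
      rw [this]; exact haI.sub hmaxI
    have hmin0meas : Measurable (fun ω => min (W 0 ω + Y ω) 0) :=
      ((hmeas 0).add (hmY _ 1)).min measurable_const
    have hmin0I : Integrable (fun ω => min (W 0 ω + Y ω) 0) P := by
      refine (hint.abs.add (integrable_const (K : ℝ))).mono'
        hmin0meas.aestronglyMeasurable (Filter.Eventually.of_forall fun ω => ?_)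
      have hy1 : 0 ≤ Y ω := pY_nonneg hK 1 ω
      have hy2 : Y ω ≤ (K : ℝ) := pY_le_K 1 ω hK
      have h1 := le_abs_self (W 0 ω)
      have h2 := neg_abs_le (W 0 ω)
      simp only [Pi.add_apply]
      rw [Real.norm_eq_abs, abs_le]
      refine ⟨le_min (by linarith) (by linarith), ?_⟩
      exact le_trans (min_le_right _ _) (add_nonneg (abs_nonneg _) hK)
    -- integral computations
    have hIφ : ∫ ω, min (max (W 0 ω + Y ω) 0) (K : ℝ) ∂P
        = ∫ ω, min (W 0 ω + Y ω) (K : ℝ) ∂P - ∫ ω, min (W 0 ω + Y ω) 0 ∂P := by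
      rw [← integral_sub hminKI hmin0I]
      exact integral_congr_ae (Filter.Eventually.of_forall fun ω => phiK_eq hK)
    have hIminK : ∫ ω, min (W 0 ω + Y ω) (K : ℝ) ∂P
        = ∫ ω, Y ω ∂P - r K := by
      have : (fun ω => min (W 0 ω + Y ω) (K : ℝ))
          = fun ω => (W 0 ω + Y ω) - max (W 0 ω + Y ω - (K : ℝ)) 0 :=
        funext fun ω => minK_eq
      rw [this, integral_sub haI hmaxI, integral_add hint hYI, hmean, hr, zero_add]
    have hIineq : ∫ ω, min (max (W 0 ω + Y ω) 0) (K : ℝ) ∂P ≤ ∫ ω, Y0 ω ∂P := by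
      refine integral_mono ?_ hY0I hpoint
      have : Measurable (fun ω => min (max (W 0 ω + Y ω) 0) (K : ℝ)) :=
        (((hmeas 0).add (hmY _ 1)).max measurable_const).min measurable_const
      refine (integrable_const (K : ℝ)).mono' this.aestronglyMeasurable
        (Filter.Eventually.of_forall fun ω => ?_)
      rw [Real.norm_eq_abs, abs_of_nonneg (le_min (le_max_right _ _) hK)]
      exact min_le_right _ _
    -- lower bound by the indicator of B
    have hlow : ε * (P B).toReal ≤ - ∫ ω, min (W 0 ω + Y ω) 0 ∂P := by
      rw [← integral_neg]
      have hind : Integrable (B.indicator fun _ => ε) P :=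
        (integrable_const ε).indicator hBmeas
      have hmono : ∀ ω, B.indicator (fun _ => ε) ω ≤ - min (W 0 ω + Y ω) 0 := by
        intro ω
        by_cases hω : ω ∈ B
        · rw [Set.indicator_of_mem hω]
          have hYb : Y ω ≤ -ε - W 0 ω :=
            ciSup_le fun n => le_trans (min_le_left _ _)
              (by have hh : W 0 ω + pR W 1 n ω ≤ -ε := hω n; linarith)
          have : W 0 ω + Y ω ≤ -ε := by linarith
          rw [min_eq_left (by linarith)]
          linarith
        · rw [Set.indicator_of_notMem hω]
          have : min (W 0 ω + Y ω) 0 ≤ 0 := min_le_right _ _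
          linarith
      have := integral_mono hind hmin0I.neg hmono
      rwa [integral_indicator_const _ hBmeas, smul_eq_mul, mul_comm] at this
    linarith [hIφ, hIminK, hIineq, hEY, hlow]
  -- step 2 : r K → 0
  have step2 : Tendsto r atTop (nhds 0) := by
    have : Tendsto r atTop (nhds (∫ _ω, (0 : ℝ) ∂P)) := by
      refine tendsto_integral_of_dominated_convergence (fun ω => |W 0 ω|)
        (fun K => ((((hmeas 0).add (hmY _ 1)).sub measurable_const).max
          measurable_const).aestronglyMeasurable)
        hint.abs (fun K => Filter.Eventually.of_forall fun ω => ?_) ?_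
      · have hy : pY W (K : ℝ) 1 ω ≤ (K : ℝ) := pY_le_K 1 ω (Nat.cast_nonneg K)
        rw [Real.norm_eq_abs, abs_of_nonneg (le_max_right _ _)]
        apply max_le _ (abs_nonneg _)
        have := le_abs_self (W 0 ω); linarith
      · filter_upwards [hG] with ω hC
        obtain ⟨C, hC⟩ := hC
        obtain ⟨N, hN⟩ := exists_nat_ge (W 0 ω + C)
        refine Tendsto.congr' ?_ tendsto_const_nhds
        rw [Filter.EventuallyEq, Filter.eventually_atTop]
        refine ⟨N, fun K hK => ?_⟩
        have hyC : pY W (K : ℝ) 1 ω ≤ C := pY_le hC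
        have hKN : (N : ℝ) ≤ (K : ℝ) := Nat.cast_le.mpr hK
        rw [max_eq_right (by linarith)]
    simpa using this
  -- conclude
  have hfinal : ε * (P B).toReal ≤ 0 := ge_of_tendsto step2
    (Filter.Eventually.of_forall step1)
  have h1 : (P B).toReal ≤ 0 := by
    by_contra hcon
    push_neg at hcon
    nlinarith
  have h0 : (P B).toReal = 0 := le_antisymm h1 ENNReal.toReal_nonneg
  exact ((ENNReal.toReal_eq_zero_iff _).mp h0).resolve_right (measure_ne_top P B)

lemma limsup_coe_top_iff (f : ℕ → ℝ) :
    limsup (fun n => ((f n : ℝ) : EReal)) atTop = ⊤ ↔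
      ∀ M : ℝ, ∀ N : ℕ, ∃ n, N ≤ n ∧ M < f n := by
  rw [limsup_eq_iInf_iSup_of_nat, iInf_eq_top]
  constructor
  · intro h M N
    have hN := h N
    rw [iSup_eq_top] at hN
    obtain ⟨i, hi⟩ := hN (M : EReal) (EReal.coe_lt_top M)
    rw [lt_iSup_iff] at hi
    obtain ⟨hiN, hlt⟩ := hi
    exact ⟨i, hiN, EReal.coe_lt_coe_iff.mp hlt⟩
  · intro h N
    rw [iSup_eq_top]
    intro b hb
    induction b with
    | bot =>
      obtain ⟨n, hn, _⟩ := h 0 N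
      exact ⟨n, by rw [lt_iSup_iff]; exact ⟨hn, EReal.bot_lt_coe _⟩⟩
    | coe b =>
      obtain ⟨n, hn, hlt⟩ := h b N
      exact ⟨n, by rw [lt_iSup_iff]; exact ⟨hn, EReal.coe_lt_coe_iff.mpr hlt⟩⟩
    | top => exact absurd hb (lt_irrefl _)

lemma liminf_coe_bot_iff (f : ℕ → ℝ) :
    liminf (fun n => ((f n : ℝ) : EReal)) atTop = ⊥ ↔
      ∀ M : ℝ, ∀ N : ℕ, ∃ n, N ≤ n ∧ f n < M := by
  rw [liminf_eq_iSup_iInf_of_nat, iSup_eq_bot]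
  constructor
  · intro h M N
    have hN := h N
    rw [iInf_eq_bot] at hN
    obtain ⟨i, hi⟩ := hN (M : EReal) (EReal.bot_lt_coe M)
    rw [iInf_lt_iff] at hi
    obtain ⟨hiN, hlt⟩ := hi
    exact ⟨i, hiN, EReal.coe_lt_coe_iff.mp hlt⟩
  · intro h N
    rw [iInf_eq_bot]
    intro b hb
    induction b with
    | top =>
      obtain ⟨n, hn, _⟩ := h 0 N
      exact ⟨n, by rw [iInf_lt_iff]; exact ⟨hn, EReal.coe_lt_top _⟩⟩
    | coe b =>
      obtain ⟨n, hn, hlt⟩ := h b N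
      exact ⟨n, by rw [iInf_lt_iff]; exact ⟨hn, EReal.coe_lt_coe_iff.mpr hlt⟩⟩
    | bot => exact absurd hb (lt_irrefl _)

lemma pS_zero_add (W : ℕ → Ω → ℝ) (n : ℕ) (ω : Ω) :
    pS W 0 n ω = ∑ k ∈ Finset.range n, W k ω :=
  Finset.sum_congr rfl fun k _ => by rw [Nat.zero_add]

lemma measurableSet_A_tail (W : ℕ → Ω → ℝ) (m : ℕ) :
    MeasurableSet[tailAlg W m]
      {ω | limsup (fun n => ((pS W 0 n ω : ℝ) : EReal)) atTop = ⊤} := by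
  set A := {ω | limsup (fun n => ((pS W 0 n ω : ℝ) : EReal)) atTop = ⊤} with hA
  show MeasurableSet[tailAlg W m] A
  have hAeq : A = ⋂ (M : ℕ), ⋂ (N : ℕ), ⋃ n ∈ {n : ℕ | max N m ≤ n},
      {ω | (M : ℝ) < pS W 0 n ω - pS W 0 m ω} := by
    ext ω
    simp only [hA, Set.mem_setOf_eq, Set.mem_iInter, Set.mem_iUnion, limsup_coe_top_iff,
      exists_prop]
    constructor
    · intro h M N
      obtain ⟨Mb, hMb⟩ := exists_nat_ge ((M : ℝ) + pS W 0 m ω)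
      obtain ⟨n, hn, hlt⟩ := h (Mb : ℝ) (max N m)
      exact ⟨n, hn, by linarith⟩
    · intro h M N
      obtain ⟨Mb, hMb⟩ := exists_nat_ge (M - pS W 0 m ω)
      obtain ⟨n, hn, hlt⟩ := h Mb N
      exact ⟨n, le_trans (le_max_left _ _) hn, by linarith⟩
  rw [hAeq]
  refine MeasurableSet.iInter fun M => MeasurableSet.iInter fun N =>
    MeasurableSet.biUnion (Set.to_countable _) fun n hn => ?_
  have hmn : m ≤ n := le_trans (le_max_right _ _) hn
  have hset : {ω | (M : ℝ) < pS W 0 n ω - pS W 0 m ω}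
      = {ω | (M : ℝ) < ∑ k ∈ Finset.Ico m n, W k ω} := by
    ext ω
    have : pS W 0 n ω - pS W 0 m ω = ∑ k ∈ Finset.Ico m n, W k ω := by
      rw [pS_zero_add, pS_zero_add, Finset.sum_Ico_eq_sub _ hmn]
    simp [this]
  rw [hset]
  have hsum : Measurable[tailAlg W m] (fun ω => ∑ k ∈ Finset.Ico m n, W k ω) :=
    Finset.measurable_sum _ fun k hk =>
      measurable_tailAlg (Finset.mem_Ico.mp hk).1
  exact measurableSet_lt measurable_const hsum

lemma A_zero_or_one {W : ℕ → Ω → ℝ} (hmeas : ∀ i, Measurable (W i))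
    (hindep : iIndepFun W P) :
    P {ω | limsup (fun n => ((pS W 0 n ω : ℝ) : EReal)) atTop = ⊤} = 0 ∨
      P {ω | limsup (fun n => ((pS W 0 n ω : ℝ) : EReal)) atTop = ⊤} = 1 := by
  refine measure_zero_or_one_of_measurableSet_limsup_atTop
    (s := fun n => MeasurableSpace.comap (W n) inferInstance)
    (fun n => (hmeas n).comap_le) hindep.iIndep ?_
  rw [limsup_eq_iInf_iSup_of_nat, MeasurableSpace.measurableSet_iInf]
  intro m
  exact measurableSet_A_tail W m

lemma measurable_iInf_exp {mΩ' : MeasurableSpace Ω} {W : ℕ → Ω → ℝ} {m : ℕ}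
    (h : ∀ i, m ≤ i → Measurable[mΩ'] (W i)) {m' : ℕ} (hm' : m ≤ m') :
    Measurable[mΩ'] (fun ω => ⨅ n, Real.exp (-(pR W m' n ω))) := by
  refine measurable_of_tendsto_metrizable
    (f := fun n ω => Real.exp (-(pR W m' n ω)))
    (fun n => Real.measurable_exp.comp (measurable_pR h hm' n).neg) ?_
  rw [tendsto_pi_nhds]
  intro ω
  exact tendsto_atTop_ciInf
    (fun a b hab => Real.exp_le_exp.mpr (neg_le_neg (pR_mono W m' ω hab)))
    ⟨0, by rintro x ⟨n, rfl⟩; positivity⟩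

/-- Main lemma: almost surely, `limsup Sₙ = ⊤`. -/
lemma main_limsup {W : ℕ → Ω → ℝ} (hmeas : ∀ i, Measurable (W i))
    (hindep : iIndepFun W P)
    (hident : ∀ n, Measure.map (W n) P = Measure.map (W 0) P)
    (hint : Integrable (W 0) P) (hmean : ∫ ω, W 0 ω ∂P = 0)
    (hnonzero : 0 < P {ω | W 0 ω ≠ 0}) :
    ∀ᵐ ω ∂P, limsup (fun n => ((pS W 0 n ω : ℝ) : EReal)) atTop = ⊤ := by
  have hmR : ∀ m n, Measurable (pR W m n) :=
    fun m n => measurable_pR (fun i _ => hmeas i) (Nat.zero_le _) n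
  set A := {ω | limsup (fun n => ((pS W 0 n ω : ℝ) : EReal)) atTop = ⊤} with hA
  rcases A_zero_or_one hmeas hindep with h0 | h1
  case inr =>
    have hAmeas : MeasurableSet A := tailAlg_le hmeas 0 A (measurableSet_A_tail W 0)
    rw [ae_iff]
    have hcompl : {ω | ¬ limsup (fun n => ((pS W 0 n ω : ℝ) : EReal)) atTop = ⊤} = Aᶜ := rfl
    rw [hcompl]
    exact (prob_compl_eq_zero_iff hAmeas).mpr h1
  case inl =>
    exfalso
    -- almost surely the partial sums are bounded above
    have hnotA : ∀ᵐ ω ∂P, ω ∉ A := by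
      rw [ae_iff]
      simpa only [not_not, Set.setOf_mem_eq] using h0
    have hGs : ∀ᵐ ω ∂P, ∃ C, ∀ n, pS W 0 n ω ≤ C := by
      filter_upwards [hnotA] with ω hω
      rw [hA, Set.mem_setOf_eq, limsup_coe_top_iff] at hω
      push_neg at hω
      obtain ⟨M, N, hMN⟩ := hω
      refine ⟨max M ((Finset.range (N + 1)).sup'
        ⟨0, Finset.mem_range.mpr (Nat.succ_pos N)⟩ (fun j => pS W 0 j ω)), fun n => ?_⟩
      rcases le_or_gt n N with h | h
      · exact le_max_of_le_right
          (Finset.le_sup' (f := fun j => pS W 0 j ω)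
            (Finset.mem_range.mpr (Nat.lt_succ_of_le h)))
      · exact le_max_of_le_left (hMN n h.le)
    have hG1 : ∀ᵐ ω ∂P, ∃ C, ∀ n, pR W 1 n ω ≤ C := by
      filter_upwards [hGs] with ω hC
      obtain ⟨C, hC⟩ := hC
      refine ⟨max 0 (C - W 0 ω), ?_⟩
      intro n
      induction n with
      | zero => rw [pR_zero]; exact le_max_left _ _
      | succ n ih =>
        rw [pR_succ]
        refine max_le ih (le_max_of_le_right ?_)
        have h1 : pS W 0 (n + 2) ω = W 0 ω + pS W 1 (n + 1) ω := pS_succ' W 0 (n + 1) ω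
        have h2 := hC (n + 2)
        linarith
    have hBs : ∀ j : ℕ, P {ω | ∀ n, W 0 ω + pR W 1 n ω ≤ -(1 / (j + 1 : ℝ))} = 0 :=
      fun j => lemA hmeas hindep hident hint hmean hG1 (by positivity)
    have hGood : ∀ᵐ ω ∂P, (∃ C, ∀ n, pR W 1 n ω ≤ C) ∧
        ∀ j : ℕ, ∃ n, -(1 / (j + 1 : ℝ)) < W 0 ω + pR W 1 n ω := by
      refine hG1.and ?_
      rw [ae_all_iff]
      intro j
      rw [ae_iff]
      have hseteq : {ω | ¬ ∃ n, -(1 / (j + 1 : ℝ)) < W 0 ω + pR W 1 n ω}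
          = {ω | ∀ n, W 0 ω + pR W 1 n ω ≤ -(1 / (j + 1 : ℝ))} := by
        ext ω; simp [not_lt]
      rw [hseteq]
      exact hBs j
    -- Laplace functionals
    set F : Ω → ℝ := fun ω => ⨅ n, Real.exp (-(pR W 0 n ω)) with hF
    set F' : Ω → ℝ := fun ω => ⨅ n, Real.exp (-(pR W 1 n ω)) with hF'
    have htendF : ∀ m ω, Tendsto (fun n => Real.exp (-(pR W m n ω))) atTop
        (nhds (⨅ n, Real.exp (-(pR W m n ω)))) := fun m ω =>
      tendsto_atTop_ciInf
        (fun a b hab => Real.exp_le_exp.mpr (neg_le_neg (pR_mono W m ω hab)))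
        ⟨0, by rintro x ⟨n, rfl⟩; positivity⟩
    have hFmeas : ∀ m, Measurable (fun ω => ⨅ n, Real.exp (-(pR W m n ω))) :=
      fun m => measurable_iInf_exp (fun i _ => hmeas i) (Nat.zero_le m)
    have hFnn : ∀ m ω, 0 ≤ ⨅ n, Real.exp (-(pR W m n ω)) :=
      fun m ω => le_ciInf fun n => (Real.exp_pos _).le
    have hFle1 : ∀ m ω, (⨅ n, Real.exp (-(pR W m n ω))) ≤ 1 := by
      intro m ω
      have h := ciInf_le (⟨0, by rintro x ⟨n, rfl⟩; positivity⟩ :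
        BddBelow (Set.range fun n => Real.exp (-(pR W m n ω)))) 0
      rwa [pR_zero, neg_zero, Real.exp_zero] at h
    have hFint : ∀ m, Integrable (fun ω => ⨅ n, Real.exp (-(pR W m n ω))) P := by
      intro m
      refine (integrable_const (1 : ℝ)).mono' (hFmeas m).aestronglyMeasurable
        (Filter.Eventually.of_forall fun ω => ?_)
      rw [Real.norm_eq_abs, abs_of_nonneg (hFnn m ω)]
      exact hFle1 m ω
    -- equality of expectations
    have hEFF' : ∫ ω, F ω ∂P = ∫ ω, F' ω ∂P := by
      have hlim : ∀ m, Tendsto (fun n => ∫ ω, Real.exp (-(pR W m n ω)) ∂P) atTop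
          (nhds (∫ ω, (⨅ n, Real.exp (-(pR W m n ω))) ∂P)) := by
        intro m
        refine tendsto_integral_of_dominated_convergence (fun _ => (1 : ℝ))
          (fun n => (Real.measurable_exp.comp (hmR m n).neg).aestronglyMeasurable)
          (integrable_const _) (fun n => Filter.Eventually.of_forall fun ω => ?_)
          (Filter.Eventually.of_forall fun ω => htendF m ω)
        rw [Real.norm_eq_abs, abs_of_nonneg (Real.exp_pos _).le, ← Real.exp_zero]
        exact Real.exp_le_exp.mpr (by simpa using pR_nonneg W m ω n)
      have heq : ∀ n, ∫ ω, Real.exp (-(pR W 1 n ω)) ∂P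
          = ∫ ω, Real.exp (-(pR W 0 n ω)) ∂P :=
        fun n => integral_comp_pR_eq hmeas hindep hident
          (Real.measurable_exp.comp measurable_neg) n 1
      have h1 := hlim 1
      rw [funext heq] at h1
      exact tendsto_nhds_unique (hlim 0) h1
    -- pointwise product identity
    have hptwise : ∀ᵐ ω ∂P, F ω = Real.exp (-(W 0 ω)) * F' ω ∧ 0 < F' ω := by
      filter_upwards [hGood] with ω hω
      obtain ⟨⟨C, hC⟩, hj⟩ := hω
      have hbddV : BddAbove (Set.range fun n => pR W 1 n ω) :=
        ⟨C, by rintro x ⟨n, rfl⟩; exact hC n⟩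
      set V' := ⨆ n, pR W 1 n ω with hV'
      have h2 : Tendsto (fun n => pR W 1 n ω) atTop (nhds V') :=
        tendsto_atTop_ciSup (pR_mono W 1 ω) hbddV
      have h1 : 0 ≤ W 0 ω + V' := by
        by_contra hcon
        push_neg at hcon
        obtain ⟨j, hjlt⟩ := exists_nat_one_div_lt (show (0 : ℝ) < -(W 0 ω + V') by linarith)
        obtain ⟨n, hn⟩ := hj j
        have h3 : pR W 1 n ω ≤ V' := le_ciSup hbddV n
        have h4 : (1 : ℝ) / ((j : ℝ) + 1) < -(W 0 ω + V') := by exact_mod_cast hjlt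
        have h5 : -(1 / ((j : ℝ) + 1)) < W 0 ω + pR W 1 n ω := hn
        linarith
      have h3 : Tendsto (fun n => pR W 0 n ω) atTop (nhds (W 0 ω + V')) := by
        have h4 : Tendsto (fun n => pR W 0 (n + 1) ω) atTop (nhds (max 0 (W 0 ω + V'))) := by
          have he : (fun n => pR W 0 (n + 1) ω) = fun n => max 0 (W 0 ω + pR W 1 n ω) :=
            funext fun n => pR_rec W 0 ω n
          rw [he]
          exact tendsto_const_nhds.max (tendsto_const_nhds.add h2)
        rw [max_eq_right h1] at h4
        exact (tendsto_add_atTop_iff_nat 1).mp h4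
      have hFeq : F ω = Real.exp (-(W 0 ω + V')) :=
        tendsto_nhds_unique (htendF 0 ω) ((Real.continuous_exp.tendsto _).comp h3.neg)
      have hF'eq : F' ω = Real.exp (-V') :=
        tendsto_nhds_unique (htendF 1 ω) ((Real.continuous_exp.tendsto _).comp h2.neg)
      constructor
      · rw [hFeq, hF'eq, ← Real.exp_add, neg_add]
      · rw [hF'eq]; exact Real.exp_pos _
    -- positivity of ∫ F'
    have hIpos : 0 < ∫ ω, F' ω ∂P := by
      rw [integral_pos_iff_support_of_nonneg_ae
        (Filter.Eventually.of_forall fun ω => hFnn 1 ω) (hFint 1)]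
      have hsupmeas : MeasurableSet (Function.support F') := by
        have hsupp : Function.support F' = F' ⁻¹' ({0}ᶜ) := by
          ext ω; simp [Function.mem_support]
        rw [hsupp]
        exact (hFmeas 1) (measurableSet_singleton 0).compl
      have hsub : ∀ᵐ ω ∂P, ω ∈ Function.support F' :=
        hptwise.mono fun ω h => ne_of_gt h.2
      have hc : P (Function.support F')ᶜ = 0 := by
        rw [ae_iff] at hsub
        exact hsub
      rw [(prob_compl_eq_zero_iff hsupmeas).mp hc]
      norm_num
    -- independence of W 0 and F'
    have hF'tail : Measurable[tailAlg W 1] F' :=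
      measurable_iInf_exp (m := 1) (fun i hi => measurable_tailAlg hi) le_rfl
    have hindF : IndepFun (W 0) F' P := indepFun_tail hmeas hindep 0 hF'tail
    -- lintegral identity
    set b := ∫⁻ ω, ENNReal.ofReal (F' ω) ∂P with hb
    set L := ∫⁻ ω, ENNReal.ofReal (Real.exp (-(W 0 ω))) ∂P with hL
    have hexpmeas : Measurable fun ω => Real.exp (-(W 0 ω)) :=
      Real.measurable_exp.comp (hmeas 0).neg
    have hofF : ∫⁻ ω, ENNReal.ofReal (F ω) ∂P = ENNReal.ofReal (∫ ω, F ω ∂P) :=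
      (ofReal_integral_eq_lintegral_ofReal (hFint 0)
        (Filter.Eventually.of_forall fun ω => hFnn 0 ω)).symm
    have hofF' : b = ENNReal.ofReal (∫ ω, F' ω ∂P) :=
      (ofReal_integral_eq_lintegral_ofReal (hFint 1)
        (Filter.Eventually.of_forall fun ω => hFnn 1 ω)).symm
    have hprod : ∫⁻ ω, ENNReal.ofReal (F ω) ∂P = L * b := by
      have h1 : ∫⁻ ω, ENNReal.ofReal (F ω) ∂P
          = ∫⁻ ω, (ENNReal.ofReal (Real.exp (-(W 0 ω)))) * ENNReal.ofReal (F' ω) ∂P :=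
        lintegral_congr_ae (hptwise.mono fun ω h => by
          dsimp only
          rw [h.1, ENNReal.ofReal_mul (Real.exp_pos _).le])
      rw [h1]
      exact lintegral_mul_eq_lintegral_mul_lintegral_of_indepFun
        (ENNReal.measurable_ofReal.comp hexpmeas)
        (ENNReal.measurable_ofReal.comp (hFmeas 1))
        (hindF.comp (ENNReal.measurable_ofReal.comp
          (Real.measurable_exp.comp measurable_neg)) ENNReal.measurable_ofReal)
    have hbeq : ∫⁻ ω, ENNReal.ofReal (F ω) ∂P = b := by
      rw [hofF, hEFF', ← hofF']
    have hbne : b ≠ 0 := by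
      rw [hofF']
      simpa using (ENNReal.ofReal_pos.mpr hIpos).ne'
    have hbtop : b ≠ ⊤ := by
      rw [hofF']; exact ENNReal.ofReal_ne_top
    have hL1 : L = 1 := by
      have hlb : L * b = b := by rw [← hprod, hbeq]
      exact (ENNReal.mul_eq_right hbne hbtop).mp hlb
    -- exp(-W 0) is integrable with mean 1
    have hexpint : Integrable (fun ω => Real.exp (-(W 0 ω))) P := by
      refine ⟨hexpmeas.aestronglyMeasurable, ?_⟩
      rw [hasFiniteIntegral_iff_ofReal
        (Filter.Eventually.of_forall fun ω => (Real.exp_pos _).le), ← hL, hL1]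
      exact ENNReal.one_lt_top
    have hexpval : ∫ ω, Real.exp (-(W 0 ω)) ∂P = 1 := by
      have h := ofReal_integral_eq_lintegral_ofReal hexpint
        (Filter.Eventually.of_forall fun ω => (Real.exp_pos _).le)
      rw [← hL, hL1] at h
      exact ENNReal.ofReal_eq_one.mp h
    -- strict Jensen: W 0 = 0 a.s.
    have hnn : ∀ ω, 0 ≤ Real.exp (-(W 0 ω)) + W 0 ω - 1 := fun ω => by
      have h := Real.add_one_le_exp (-(W 0 ω)); linarith
    have hfadd : Integrable (fun ω => Real.exp (-(W 0 ω)) + W 0 ω) P := hexpint.add hint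
    have hggint : Integrable (fun ω => Real.exp (-(W 0 ω)) + W 0 ω - 1) P :=
      hfadd.sub (integrable_const 1)
    have hzero : ∫ ω, (Real.exp (-(W 0 ω)) + W 0 ω - 1) ∂P = 0 := by
      rw [integral_sub hfadd (integrable_const 1),
        integral_add hexpint hint, hexpval, hmean, integral_const]
      simp
    have hgg := (integral_eq_zero_iff_of_nonneg hnn hggint).mp hzero
    have hW0 : ∀ᵐ ω ∂P, W 0 ω = 0 := by
      filter_upwards [hgg] with ω hω
      by_contra hne
      have h2 := Real.add_one_lt_exp (show -(W 0 ω) ≠ 0 from neg_ne_zero.mpr hne)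
      have h3 : Real.exp (-(W 0 ω)) + W 0 ω - 1 = 0 := hω
      linarith
    have hPzero : P {ω | W 0 ω ≠ 0} = 0 := by
      rw [ae_iff] at hW0
      exact hW0
    rw [hPzero] at hnonzero
    exact lt_irrefl 0 hnonzero

end CF

/-- Oscillation part of the Chung–Fuchs theorem: an i.i.d. mean-zero real random walk
with `P(W₁ ≠ 0) > 0` oscillates: a.s. `liminf Sₙ = -∞` and `limsup Sₙ = +∞`. -/
theorem chung_fuchs_oscillates
    {Ω : Type*} [MeasurableSpace Ω] (P : Measure Ω) [IsProbabilityMeasure P]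
    (W : ℕ → Ω → ℝ) (hmeas : ∀ n, Measurable (W n))
    (hindep : iIndepFun W P)
    (hident : ∀ n, Measure.map (W n) P = Measure.map (W 0) P)
    (hint : Integrable (W 0) P) (hmean : ∫ ω, W 0 ω ∂P = 0)
    (hnonzero : 0 < P {ω | W 0 ω ≠ 0}) :
    ∀ᵐ ω ∂P,
      liminf (fun n => ((∑ k ∈ Finset.range n, W k ω : ℝ) : EReal)) atTop = ⊥ ∧
      limsup (fun n => ((∑ k ∈ Finset.range n, W k ω : ℝ) : EReal)) atTop = ⊤ := by
  -- the negated walk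
  set W' : ℕ → Ω → ℝ := fun n ω => -(W n ω) with hW'
  have hmeas' : ∀ n, Measurable (W' n) := fun n => (hmeas n).neg
  have hindep' : iIndepFun W' P := by
    have := hindep.comp (fun _ => fun x : ℝ => -x) (fun _ => measurable_neg)
    exact this
  have hident' : ∀ n, Measure.map (W' n) P = Measure.map (W' 0) P := by
    intro n
    have h1 : Measure.map (W' n) P = Measure.map (fun x : ℝ => -x) (Measure.map (W n) P) :=
      (Measure.map_map measurable_neg (hmeas n)).symm
    have h2 : Measure.map (W' 0) P = Measure.map (fun x : ℝ => -x) (Measure.map (W 0) P) :=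
      (Measure.map_map measurable_neg (hmeas 0)).symm
    rw [h1, h2, hident n]
  have hint' : Integrable (W' 0) P := hint.neg
  have hmean' : ∫ ω, W' 0 ω ∂P = 0 := by
    have : ∫ ω, W' 0 ω ∂P = - ∫ ω, W 0 ω ∂P := integral_neg _
    rw [this, hmean, neg_zero]
  have hnonzero' : 0 < P {ω | W' 0 ω ≠ 0} := by
    have : {ω | W' 0 ω ≠ 0} = {ω | W 0 ω ≠ 0} := by
      ext ω; simp [hW', neg_ne_zero]
    rwa [this]
  have h1 := CF.main_limsup hmeas hindep hident hint hmean hnonzero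
  have h2 := CF.main_limsup hmeas' hindep' hident' hint' hmean' hnonzero'
  filter_upwards [h1, h2] with ω hw1 hw2
  have hps : ∀ n, CF.pS W 0 n ω = ∑ k ∈ Finset.range n, W k ω := fun n => CF.pS_zero_add W n ω
  have hps' : ∀ n, CF.pS W' 0 n ω = -(∑ k ∈ Finset.range n, W k ω) := by
    intro n
    rw [CF.pS_zero_add]
    simp [hW']
  constructor
  · -- liminf = ⊥
    rw [CF.liminf_coe_bot_iff]
    intro M N
    simp only [hps'] at hw2
    rw [CF.limsup_coe_top_iff] at hw2
    obtain ⟨n, hn, hlt⟩ := hw2 (-M) N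
    exact ⟨n, hn, by linarith⟩
  · simp only [hps] at hw1
    exact hw1
end

section
/- For an i.i.d. real random walk Sₙ = W₁ + ⋯ + Wₙ, the set of recurrent points {a ∈ ℝ : for all ε > 0, ℙ(|Sₙ − a| < ε i.o.) = 1} is a closed additive subgroup of ℝ; hence it is either empty, all of ℝ, or a lattice aℤ. -/
open MeasureTheory ProbabilityTheory Filter Finset

section Aux

variable {Ω : Type*} [MeasurableSpace Ω] {P : Measure Ω} [IsProbabilityMeasure P]
  {W : ℕ → Ω → ℝ}

lemma meas_freq {m' : MeasurableSpace Ω} (X : ℕ → Ω → ℝ)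
    (hX : ∀ n, Measurable[m'] (X n)) (c ε : ℝ) :
    MeasurableSet[m'] {ω | ∃ᶠ n in atTop, |(∑ k ∈ Finset.range n, X k ω) - c| < ε} := by
  have hball : {x : ℝ | |x - c| < ε} = Metric.ball c ε := by
    ext x; simp [Metric.mem_ball, Real.dist_eq]
  have h1 : {ω | ∃ᶠ n in atTop, |(∑ k ∈ Finset.range n, X k ω) - c| < ε}
      = ⋂ N, ⋃ n, ⋃ _ : N ≤ n, {ω | |(∑ k ∈ Finset.range n, X k ω) - c| < ε} := by
    ext ω
    simp only [Set.mem_setOf_eq, frequently_atTop, Set.mem_iInter, Set.mem_iUnion]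
    exact ⟨fun h N => by obtain ⟨n, hn, h'⟩ := h N; exact ⟨n, hn, h'⟩,
      fun h N => by obtain ⟨n, hn, h'⟩ := h N; exact ⟨n, hn, h'⟩⟩
  rw [h1]
  refine MeasurableSet.iInter fun N => MeasurableSet.iUnion fun n =>
    MeasurableSet.iUnion fun _ => ?_
  have hsum : Measurable[m'] fun ω => ∑ k ∈ Finset.range n, X k ω :=
    Finset.measurable_sum _ fun k _ => hX k
  have : {ω | |(∑ k ∈ Finset.range n, X k ω) - c| < ε}
      = (fun ω => ∑ k ∈ Finset.range n, X k ω) ⁻¹' {x : ℝ | |x - c| < ε} := rfl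
  rw [this, hball]
  exact hsum measurableSet_ball

lemma map_sel_eq_pi (hmeas : ∀ n, Measurable (W n))
    (hindep : iIndepFun W P)
    (hident : ∀ n, Measure.map (W n) P = Measure.map (W 0) P)
    {ι' : Type*} [Fintype ι'] (g : ι' → ℕ) (hg : Function.Injective g) :
    Measure.map (fun ω (i : ι') => W (g i) ω) P
      = Measure.pi (fun _ : ι' => Measure.map (W 0) P) := by
  haveI : IsProbabilityMeasure (Measure.map (W 0) P) :=
    Measure.isProbabilityMeasure_map (hmeas 0).aemeasurable
  refine (Measure.pi_eq fun s hs => ?_).symm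
  have hV : Measurable fun ω (i : ι') => W (g i) ω :=
    measurable_pi_lambda _ fun i => hmeas (g i)
  rw [Measure.map_apply hV (MeasurableSet.univ_pi hs)]
  classical
  set t : ℕ → Set ℝ := fun j => if h : ∃ i, g i = j then s h.choose else Set.univ with ht
  have htg : ∀ i, t (g i) = s i := by
    intro i
    have h : ∃ i', g i' = g i := ⟨i, rfl⟩
    simp only [ht, dif_pos h]
    rw [hg h.choose_spec]
  have htmeas : ∀ j, MeasurableSet (t j) := by
    intro j
    by_cases h : ∃ i, g i = j
    · simp only [ht, dif_pos h]; exact hs _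
    · simp only [ht, dif_neg h]; exact MeasurableSet.univ
  have hpre : (fun ω (i : ι') => W (g i) ω) ⁻¹' Set.pi Set.univ s
      = ⋂ j ∈ Finset.image g Finset.univ, W j ⁻¹' t j := by
    ext ω
    simp only [Set.mem_preimage, Set.mem_pi, Set.mem_univ, forall_true_left,
      Set.mem_iInter, Finset.mem_image, Finset.mem_univ, true_and]
    constructor
    · rintro h j ⟨i, rfl⟩
      rw [htg]; exact h i
    · intro h i
      have := h (g i) ⟨i, rfl⟩
      rwa [htg] at this
  rw [hpre, hindep.measure_inter_preimage_eq_mul _ (fun j _ => htmeas j),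
    Finset.prod_image (fun i _ j _ h => hg h)]
  refine Finset.prod_congr rfl fun i _ => ?_
  rw [htg, ← Measure.map_apply (hmeas (g i)) (hs i), hident (g i)]

lemma map_shift_eq (hmeas : ∀ n, Measurable (W n))
    (hindep : iIndepFun W P)
    (hident : ∀ n, Measure.map (W n) P = Measure.map (W 0) P) (m : ℕ) :
    Measure.map (fun ω (k : ℕ) => W (m + k) ω) P
      = Measure.map (fun ω (k : ℕ) => W k ω) P := by
  have hV : Measurable fun ω (k : ℕ) => W (m + k) ω :=
    measurable_pi_lambda _ fun k => hmeas (m + k)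
  have hV' : Measurable fun ω (k : ℕ) => W k ω :=
    measurable_pi_lambda _ fun k => hmeas k
  refine ext_of_generate_finite (measurableCylinders fun _ : ℕ => ℝ)
    generateFrom_measurableCylinders.symm isPiSystem_measurableCylinders ?_ (by rw [Measure.map_apply hV MeasurableSet.univ, Measure.map_apply hV' MeasurableSet.univ]; simp)
  intro u hu
  obtain ⟨I, S, hS, rfl⟩ := (mem_measurableCylinders _).1 hu
  have hc : MeasurableSet (cylinder I S) := (I.measurable_restrict (X := fun _ : ℕ => ℝ)) hS
  rw [Measure.map_apply hV hc, Measure.map_apply hV' hc]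
  have e1 : (fun ω (k : ℕ) => W (m + k) ω) ⁻¹' cylinder I S
      = (fun ω (i : I) => W (m + (i : ℕ)) ω) ⁻¹' S := rfl
  have e2 : (fun ω (k : ℕ) => W k ω) ⁻¹' cylinder I S
      = (fun ω (i : I) => W (i : ℕ) ω) ⁻¹' S := rfl
  rw [e1, e2,
    ← Measure.map_apply (measurable_pi_lambda _ fun i : I => hmeas (m + i)) hS,
    ← Measure.map_apply (measurable_pi_lambda _ fun i : I => hmeas i) hS,
    map_sel_eq_pi hmeas hindep hident (fun i : I => m + (i : ℕ))
      (fun a b h => Subtype.ext (Nat.add_left_cancel h)),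
    map_sel_eq_pi hmeas hindep hident (fun i : I => (i : ℕ))
      (fun a b h => Subtype.ext h)]

end Aux

section Aux2

variable {Ω : Type*} [MeasurableSpace Ω] {P : Measure Ω} [IsProbabilityMeasure P]
  {W : ℕ → Ω → ℝ}

set_option maxHeartbeats 1000000 in
lemma prob_shift (hmeas : ∀ n, Measurable (W n))
    (hindep : iIndepFun W P)
    (hident : ∀ n, Measure.map (W n) P = Measure.map (W 0) P) (m : ℕ) (c ε : ℝ) :
    P {ω | ∃ᶠ n in atTop, |(∑ k ∈ Finset.range n, W (m + k) ω) - c| < ε}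
      = P {ω | ∃ᶠ n in atTop, |(∑ k ∈ Finset.range n, W k ω) - c| < ε} := by
  have hV : Measurable fun ω (k : ℕ) => W (m + k) ω :=
    measurable_pi_lambda _ fun k => hmeas (m + k)
  have hV' : Measurable fun ω (k : ℕ) => W k ω :=
    measurable_pi_lambda _ fun k => hmeas k
  have hG : MeasurableSet {v : ℕ → ℝ | ∃ᶠ n in atTop, |(∑ k ∈ Finset.range n, v k) - c| < ε} :=
    meas_freq (fun k (v : ℕ → ℝ) => v k) (fun k => measurable_pi_apply k) c ε
  have e1 : {ω | ∃ᶠ n in atTop, |(∑ k ∈ Finset.range n, W (m + k) ω) - c| < ε}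
      = (fun ω (k : ℕ) => W (m + k) ω) ⁻¹'
        {v : ℕ → ℝ | ∃ᶠ n in atTop, |(∑ k ∈ Finset.range n, v k) - c| < ε} := rfl
  have e2 : {ω | ∃ᶠ n in atTop, |(∑ k ∈ Finset.range n, W k ω) - c| < ε}
      = (fun ω (k : ℕ) => W k ω) ⁻¹'
        {v : ℕ → ℝ | ∃ᶠ n in atTop, |(∑ k ∈ Finset.range n, v k) - c| < ε} := rfl
  rw [e1, e2, ← Measure.map_apply hV hG, ← Measure.map_apply hV' hG,
    map_shift_eq hmeas hindep hident m]

lemma sub_mem_rec (hmeas : ∀ n, Measurable (W n))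
    (hindep : iIndepFun W P)
    (hident : ∀ n, Measure.map (W n) P = Measure.map (W 0) P) {x y : ℝ}
    (hx : ∀ ε : ℝ, 0 < ε →
      ∀ᵐ ω ∂P, ∃ᶠ n in atTop, |(∑ k ∈ Finset.range n, W k ω) - x| < ε)
    (hy : ∀ ε : ℝ, 0 < ε →
      ∀ᵐ ω ∂P, ∃ᶠ n in atTop, |(∑ k ∈ Finset.range n, W k ω) - y| < ε) :
    ∀ ε : ℝ, 0 < ε →
      ∀ᵐ ω ∂P, ∃ᶠ n in atTop, |(∑ k ∈ Finset.range n, W k ω) - (x - y)| < ε := by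
  intro ε hε
  have hε' : (0:ℝ) < ε / 2 := by linarith
  have hSmeas : ∀ n, Measurable fun ω => ∑ k ∈ Finset.range n, W k ω :=
    fun n => Finset.measurable_sum _ fun k _ => hmeas k
  have hball : ∀ c ε₀ : ℝ, MeasurableSet {x : ℝ | |x - c| < ε₀} := by
    intro c ε₀
    have : {x : ℝ | |x - c| < ε₀} = Metric.ball c ε₀ := by
      ext x; simp [Metric.mem_ball, Real.dist_eq]
    rw [this]; exact measurableSet_ball
  have hfreqmeas : ∀ c ε₀ : ℝ,
      MeasurableSet {ω | ∃ᶠ n in atTop, |(∑ k ∈ Finset.range n, W k ω) - c| < ε₀} :=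
    fun c ε₀ => meas_freq W hmeas c ε₀
  -- pick a time m at which the walk is near y with positive probability
  have hBy : P {ω | ∃ᶠ n in atTop, |(∑ k ∈ Finset.range n, W k ω) - y| < ε/2} = 1 :=
    (mem_ae_iff_prob_eq_one (hfreqmeas y (ε/2))).1 (Filter.eventually_iff.1 (hy (ε/2) hε'))
  obtain ⟨m, hm⟩ : ∃ m, 0 < P {ω | |(∑ k ∈ Finset.range m, W k ω) - y| < ε/2} := by
    apply exists_measure_pos_of_not_measure_iUnion_null
    intro h
    have hsub : {ω | ∃ᶠ n in atTop, |(∑ k ∈ Finset.range n, W k ω) - y| < ε/2}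
        ⊆ ⋃ n, {ω | |(∑ k ∈ Finset.range n, W k ω) - y| < ε/2} := by
      intro ω hω
      obtain ⟨n, -, hn⟩ := frequently_atTop.1 hω 0
      exact Set.mem_iUnion.2 ⟨n, hn⟩
    have h1 := measure_mono (μ := P) hsub
    rw [hBy, h] at h1
    simp at h1
  have hshift := prob_shift hmeas hindep hident m (x - y) ε
  set A := {ω | |(∑ k ∈ Finset.range m, W k ω) - y| < ε/2} with hA
  set B := {ω | ∃ᶠ n in atTop, |(∑ k ∈ Finset.range n, W k ω) - x| < ε/2} with hB
  set C := {ω | ∃ᶠ n in atTop, |(∑ k ∈ Finset.range n, W (m + k) ω) - (x - y)| < ε} with hC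
  have hABC : A ∩ B ⊆ C := by
    rintro ω ⟨hAω, hBω⟩
    rw [hC, Set.mem_setOf_eq, frequently_atTop]
    intro N
    obtain ⟨n, hn, hnx⟩ := frequently_atTop.1 hBω (N + m)
    refine ⟨n - m, by omega, ?_⟩
    have hmn : m ≤ n := by omega
    have hsum : (∑ k ∈ Finset.range (n - m), W (m + k) ω)
        = (∑ k ∈ Finset.range n, W k ω) - ∑ k ∈ Finset.range m, W k ω := by
      have hre := Finset.sum_Ico_eq_sum_range (f := fun i => W i ω) (m := m) (n := n)
      rw [← hre, Finset.sum_Ico_eq_sub _ hmn]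
    rw [hsum]
    have he : (∑ k ∈ Finset.range n, W k ω) - (∑ k ∈ Finset.range m, W k ω) - (x - y)
        = ((∑ k ∈ Finset.range n, W k ω) - x) - ((∑ k ∈ Finset.range m, W k ω) - y) := by
      ring
    rw [he]
    calc |((∑ k ∈ Finset.range n, W k ω) - x) - ((∑ k ∈ Finset.range m, W k ω) - y)|
        ≤ |(∑ k ∈ Finset.range n, W k ω) - x| + |(∑ k ∈ Finset.range m, W k ω) - y| :=
          abs_sub _ _
      _ < ε := by
          have := hAω
          rw [hA, Set.mem_setOf_eq] at this
          linarith
  -- independence of A and C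
  have hindep' : iIndep (fun n => MeasurableSpace.comap (W n) inferInstance) P :=
    (iIndepFun_iff_iIndep _ _ _).1 hindep
  set m₁ := ⨆ i ∈ {i : ℕ | i < m}, MeasurableSpace.comap (W i) inferInstance
    with hm₁
  set m₂ := ⨆ i ∈ {i : ℕ | m ≤ i}, MeasurableSpace.comap (W i) inferInstance
    with hm₂
  have hIndep : Indep m₁ m₂ P := by
    refine indep_iSup_of_disjoint (fun i => (hmeas i).comap_le) hindep' ?_
    rw [Set.disjoint_left]
    intro i hi hi'
    simp only [Set.mem_setOf_eq] at hi hi'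
    omega
  have hW1 : ∀ i, i < m → Measurable[m₁] (W i) := fun i hi =>
    Measurable.of_comap_le (le_biSup (fun j => MeasurableSpace.comap (W j) inferInstance)
      (show i ∈ {i : ℕ | i < m} from hi))
  have hW2 : ∀ i, m ≤ i → Measurable[m₂] (W i) := fun i hi =>
    Measurable.of_comap_le (le_biSup (fun j => MeasurableSpace.comap (W j) inferInstance)
      (show i ∈ {i : ℕ | m ≤ i} from hi))
  have hA1 : MeasurableSet[m₁] A := by
    have hsm : Measurable[m₁] fun ω => ∑ k ∈ Finset.range m, W k ω :=
      Finset.measurable_sum _ fun k hk => hW1 k (Finset.mem_range.1 hk)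
    exact hsm (hball y (ε/2))
  have hC2 : MeasurableSet[m₂] C :=
    meas_freq (fun k => W (m + k)) (fun k => hW2 (m + k) (by omega)) (x - y) ε
  have hPAC : P (A ∩ C) = P A * P C :=
    (hIndep.indepSet_of_measurableSet hA1 hC2).measure_inter_eq_mul
  have hPB : P B = 1 :=
    (mem_ae_iff_prob_eq_one (hfreqmeas x (ε/2))).1 (Filter.eventually_iff.1 (hx (ε/2) hε'))
  have hABeq : P (A ∩ B) = P A := by
    have hBu : B =ᵐ[P] Set.univ := by
      rw [ae_eq_univ]
      exact (prob_compl_eq_zero_iff (hfreqmeas x (ε/2))).2 hPB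
    calc P (A ∩ B) = P (A ∩ Set.univ) := measure_congr ((ae_eq_refl A).inter hBu)
      _ = P A := by rw [Set.inter_univ]
  have hle : P A ≤ P A * P C := by
    rw [← hPAC, ← hABeq]
    exact measure_mono fun ω hω => ⟨hω.1, hABC hω⟩
  have hPC : P C = 1 := by
    by_contra h
    have hlt : P C < 1 := lt_of_le_of_ne prob_le_one h
    have h2 := (ENNReal.mul_lt_mul_iff_right (ne_of_gt hm) (measure_ne_top P A)).2 hlt
    rw [mul_one] at h2
    exact absurd hle (not_le.2 h2)
  have hC0 : P {ω | ∃ᶠ n in atTop, |(∑ k ∈ Finset.range n, W k ω) - (x - y)| < ε} = 1 := by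
    rw [← hshift]; exact hPC
  exact Filter.eventually_iff.2 ((mem_ae_iff_prob_eq_one (hfreqmeas _ _)).2 hC0)

end Aux2

/-- For an i.i.d. real random walk, the set of recurrent points
`{a : ∀ ε > 0, P(|Sₙ - a| < ε i.o.) = 1}` is closed, and is (if nonempty) an additive
subgroup of `ℝ`; hence it is either empty, all of `ℝ`, or a lattice `aℤ`. -/
theorem recurrent_points_closed_subgroup
    {Ω : Type*} [MeasurableSpace Ω] (P : Measure Ω) [IsProbabilityMeasure P]
    (W : ℕ → Ω → ℝ) (hmeas : ∀ n, Measurable (W n))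
    (hindep : iIndepFun W P)
    (hident : ∀ n, Measure.map (W n) P = Measure.map (W 0) P)
    (R : Set ℝ)
    (hR : R = {a : ℝ | ∀ ε : ℝ, 0 < ε →
      ∀ᵐ ω ∂P, ∃ᶠ n in atTop, |(∑ k ∈ Finset.range n, W k ω) - a| < ε}) :
    IsClosed R ∧
    (R.Nonempty → ∃ H : AddSubgroup ℝ, (H : Set ℝ) = R) ∧
    (R = ∅ ∨ R = Set.univ ∨ ∃ a : ℝ, R = {x : ℝ | ∃ k : ℤ, x = a * k}) := by
  have hsub : ∀ x ∈ R, ∀ y ∈ R, x - y ∈ R := by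
    intro x hx y hy
    rw [hR] at hx hy ⊢
    exact sub_mem_rec hmeas hindep hident hx hy
  have hclosed : IsClosed R := by
    refine isClosed_of_closure_subset fun a ha => ?_
    rw [hR]
    intro ε hε
    obtain ⟨b, hbR, hab⟩ := Metric.mem_closure_iff.1 ha (ε/2) (by linarith)
    rw [hR] at hbR
    filter_upwards [hbR (ε/2) (by linarith)] with ω hω
    refine hω.mono fun n hn => ?_
    have h1 : |(∑ k ∈ Finset.range n, W k ω) - a|
        ≤ |(∑ k ∈ Finset.range n, W k ω) - b| + |b - a| := abs_sub_le _ _ _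
    have hba : |b - a| < ε/2 := by
      rw [← Real.dist_eq, dist_comm]; exact hab
    linarith
  have hgrp : R.Nonempty → ∃ H : AddSubgroup ℝ, (H : Set ℝ) = R := by
    rintro ⟨a, ha⟩
    have h0 : (0 : ℝ) ∈ R := by
      have := hsub a ha a ha; rwa [sub_self] at this
    refine ⟨{ carrier := R
              zero_mem' := h0
              add_mem' := ?_
              neg_mem' := ?_ }, rfl⟩
    · intro p q hp hq
      have hnq := hsub 0 h0 q hq
      have := hsub p hp _ hnq
      have he : p - (0 - q) = p + q := by ring
      rwa [he] at this
    · intro p hp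
      have := hsub 0 h0 p hp
      rwa [zero_sub] at this
  refine ⟨hclosed, hgrp, ?_⟩
  rcases Set.eq_empty_or_nonempty R with he | hne
  · exact Or.inl he
  obtain ⟨H, hH⟩ := hgrp hne
  rcases AddSubgroup.dense_or_cyclic H with hd | ⟨a, hc⟩
  · refine Or.inr (Or.inl ?_)
    have h1 := hd.closure_eq
    rw [hH] at h1
    rw [← hclosed.closure_eq, h1]
  · refine Or.inr (Or.inr ⟨a, ?_⟩)
    ext z
    rw [← hH, hc]
    constructor
    · intro h
      obtain ⟨n, hn⟩ := AddSubgroup.mem_closure_singleton.1 h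
      exact ⟨n, by rw [← hn, zsmul_eq_mul, mul_comm]⟩
    · rintro ⟨k, rfl⟩
      exact AddSubgroup.mem_closure_singleton.2 ⟨k, by rw [zsmul_eq_mul, mul_comm]⟩
end

section
/- Let (X, ℬ, T, μ) be an ergodic measure-preserving dynamical system with μ(X)=1 and f : X → ℝ measurable with μ(limₙ Sₙf/n = 0) = 1, where Sₙf = f + f∘T + ⋯ + f∘T^{n−1}. Then Sf is recurrent: for all c > 0, μ(|Sₙf| ≤ c for infinitely many n) = 1. -/
open MeasureTheory Filter Finset

private lemma growth_lemma (u : ℕ → ℝ)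
    (h : Tendsto (fun n => u n / (n : ℝ)) atTop (nhds 0)) {δ : ℝ} (hδ : 0 < δ) :
    ∀ᶠ N : ℕ in atTop, ∀ n < N, |u n| ≤ δ * N := by
  have h0 : Tendsto (fun n : ℕ => |u n / (n : ℝ)|) atTop (nhds 0) := by
    simpa using h.abs
  obtain ⟨K, hK⟩ := eventually_atTop.1 (h0.eventually_lt_const hδ)
  set C : ℝ := ∑ n ∈ Finset.range (K + 1), |u n| with hC
  have hCn : ∀ n ≤ K, |u n| ≤ C := fun n hn =>
    Finset.single_le_sum (fun i _ => abs_nonneg (u i))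
      (Finset.mem_range.2 (Nat.lt_succ_of_le hn))
  obtain ⟨N₀, hN₀⟩ := exists_nat_ge (C / δ)
  filter_upwards [eventually_ge_atTop N₀, eventually_ge_atTop (K + 1)] with N hN1 hN2 n hn
  have hNpos : (0 : ℝ) < N := by
    have : 1 ≤ N := le_trans (Nat.le_add_left 1 K) hN2
    exact_mod_cast this
  by_cases hnK : n ≤ K
  · have h1 : C ≤ δ * N := by
      have h2 : C / δ ≤ (N : ℝ) := le_trans hN₀ (by exact_mod_cast hN1)
      calc C = δ * (C / δ) := by field_simp
        _ ≤ δ * N := by nlinarith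
    exact le_trans (hCn n hnK) h1
  · push_neg at hnK
    have hn1 : (0 : ℝ) < n := by
      have : 1 ≤ n := Nat.one_le_iff_ne_zero.2 (by omega)
      exact_mod_cast this
    have h3 : |u n / (n : ℝ)| < δ := hK n (le_of_lt hnK)
    rw [abs_div, abs_of_pos hn1] at h3
    have h4 : |u n| < δ * n := by
      rw [div_lt_iff₀ hn1] at h3; linarith
    have h5 : (n : ℝ) ≤ N := by exact_mod_cast le_of_lt hn
    nlinarith

private lemma card_separated {V : Finset ℕ} {g : ℕ → ℝ} {ε b : ℝ} (hε : 0 < ε) (hb0 : 0 ≤ b)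
    (hsep : ∀ m ∈ V, ∀ n ∈ V, m ≠ n → ε < |g m - g n|)
    (hb : ∀ n ∈ V, |g n| ≤ b) :
    (V.card : ℝ) ≤ 2 * b / ε + 2 := by
  have hmaps : ∀ n ∈ V, ⌊g n / ε⌋ ∈ Finset.Icc ⌊-b / ε⌋ ⌊b / ε⌋ := by
    intro n hn
    have h1 := abs_le.1 (hb n hn)
    rw [Finset.mem_Icc]
    constructor
    · exact Int.floor_le_floor (by apply div_le_div_of_nonneg_right h1.1 hε.le)
    · exact Int.floor_le_floor (by apply div_le_div_of_nonneg_right h1.2 hε.le)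
  have hinj : Set.InjOn (fun n => ⌊g n / ε⌋) ↑V := by
    intro m hm n hn hmn
    by_contra hne
    have h1 := hsep m hm n hn hne
    have h2 : |g m / ε - g n / ε| < 1 := Int.abs_sub_lt_one_of_floor_eq_floor hmn
    rw [div_sub_div_same, abs_div, abs_of_pos hε, div_lt_one hε] at h2
    linarith
  have hcard := Finset.card_le_card_of_injOn _ hmaps hinj
  have hz : (0 : ℤ) ≤ ⌊b / ε⌋ + 1 - ⌊-b / ε⌋ := by
    have h1 : ⌊-b / ε⌋ ≤ ⌊b / ε⌋ :=
      Int.floor_le_floor (by apply div_le_div_of_nonneg_right (by linarith) hε.le)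
    omega
  have h2 : ((Finset.Icc ⌊-b / ε⌋ ⌊b / ε⌋).card : ℝ) ≤ 2 * b / ε + 2 := by
    rw [Int.card_Icc]
    have h3 : (((⌊b / ε⌋ + 1 - ⌊-b / ε⌋).toNat : ℕ) : ℝ) = ((⌊b / ε⌋ : ℝ) + 1 - (⌊-b / ε⌋ : ℝ)) := by
      rw [show (((⌊b / ε⌋ + 1 - ⌊-b / ε⌋).toNat : ℕ) : ℝ)
          = (((⌊b / ε⌋ + 1 - ⌊-b / ε⌋).toNat : ℤ) : ℝ) by push_cast; ring,
        Int.toNat_of_nonneg hz]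
      push_cast; ring
    rw [h3]
    have h4 : (⌊b / ε⌋ : ℝ) ≤ b / ε := Int.floor_le _
    have h5 : -b / ε - 1 < (⌊-b / ε⌋ : ℝ) := Int.sub_one_lt_floor _
    have h6 : -b / ε = -(b / ε) := by ring
    have h7 : 2 * b / ε = b / ε + b / ε := by ring
    linarith
  exact le_trans (by exact_mod_cast hcard) h2

open scoped Classical in
private lemma sum_indicator_eq_card {X : Type*} (B : Set X) (T : X → X) (x : X) (N : ℕ) :
    ∑ n ∈ Finset.range N, (T^[n] ⁻¹' B).indicator (1 : X → ℝ) x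
      = ((Finset.range N).filter (fun n => T^[n] x ∈ B)).card := by
  rw [← Finset.sum_boole]
  refine Finset.sum_congr rfl fun n _ => ?_
  simp [Set.indicator_apply, Set.mem_preimage]

private lemma null_no_return {X : Type*} [MeasurableSpace X] (μ : Measure X)
    [IsProbabilityMeasure μ] (T : X → X) (hTm : MeasurePreserving T μ μ)
    (f : X → ℝ) (hf : Measurable f)
    (hlim : ∀ᵐ x ∂μ, Tendsto
      (fun n => birkhoffSum T f n x / (n : ℝ)) atTop (nhds 0))
    {ε : ℝ} (hε : 0 < ε) :
    μ {x | ∀ n, 1 ≤ n → ε < |birkhoffSum T f n x|} = 0 := by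
  classical
  set S : ℕ → X → ℝ := birkhoffSum T f with hSdef
  have hS : ∀ n, Measurable (S n) := fun n =>
    Finset.measurable_sum _ (fun k _ => hf.comp (hTm.measurable.iterate k))
  set B : Set X := {x | ∀ n, 1 ≤ n → ε < |S n x|} with hBdef
  have hB : MeasurableSet B := by
    have : B = ⋂ n, ⋂ _h : 1 ≤ n, {x | ε < |S n x|} := by
      ext x; simp [hBdef]
    rw [this]
    exact MeasurableSet.iInter fun n => MeasurableSet.iInter fun _ =>
      measurableSet_lt measurable_const (hS n).abs
  set F : ℕ → X → ℝ := fun N x =>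
    (∑ n ∈ Finset.range N, (T^[n] ⁻¹' B).indicator (1 : X → ℝ) x) / N with hFdef
  have hFapp : ∀ N x, F N x
      = (∑ n ∈ Finset.range N, (T^[n] ⁻¹' B).indicator (1 : X → ℝ) x) / N := fun N x => rfl
  have hFmeas : ∀ N, Measurable (F N) := by
    intro N
    apply Measurable.div_const
    exact Finset.measurable_sum _ fun n _ =>
      measurable_const.indicator ((hTm.measurable.iterate n) hB)
  have hFbound : ∀ N x, 0 ≤ F N x ∧ F N x ≤ 1 := by
    intro N x
    have hcard := sum_indicator_eq_card B T x N
    rw [hFapp]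
    constructor
    · apply div_nonneg _ (Nat.cast_nonneg N)
      rw [hcard]; exact Nat.cast_nonneg _
    · rcases Nat.eq_zero_or_pos N with h | h
      · simp [h]
      · rw [hcard, div_le_one (by exact_mod_cast h)]
        exact_mod_cast le_trans (Finset.card_filter_le _ _) (by simp)
  -- pointwise convergence to 0
  have hptwise : ∀ᵐ x ∂μ, Tendsto (fun N => F N x) atTop (nhds 0) := by
    filter_upwards [hlim] with x hx
    rw [Metric.tendsto_atTop]
    intro δ' hδ'
    set δ : ℝ := ε * δ' / 4 with hδdef
    have hδpos : 0 < δ := by positivity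
    have hE1 := growth_lemma (fun n => S n x) hx hδpos
    have hE2 : ∀ᶠ N : ℕ in atTop, (4 : ℝ) / δ' < N := by
      obtain ⟨M, hM⟩ := exists_nat_gt ((4 : ℝ) / δ')
      filter_upwards [eventually_ge_atTop M] with N hN
      exact lt_of_lt_of_le hM (by exact_mod_cast hN)
    obtain ⟨K, hK⟩ := eventually_atTop.1 (hE1.and (hE2.and (eventually_ge_atTop 1)))
    refine ⟨K, fun N hN => ?_⟩
    obtain ⟨hg, hN4, hN1⟩ := hK N hN
    have hNpos : (0 : ℝ) < N := by exact_mod_cast hN1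
    set V : Finset ℕ := (Finset.range N).filter (fun n => T^[n] x ∈ B) with hVdef
    have hsep : ∀ m ∈ V, ∀ n ∈ V, m ≠ n → ε < |S m x - S n x| := by
      have key : ∀ m n, m ∈ V → n ∈ V → m < n → ε < |S n x - S m x| := by
        intro m n hm hn hmn
        have hmB : T^[m] x ∈ B := (Finset.mem_filter.1 hm).2
        have hadd : S n x = S m x + S (n - m) (T^[m] x) := by
          have := birkhoffSum_add T f m (n - m) x
          rwa [Nat.add_sub_cancel' (le_of_lt hmn)] at this
        have h1 : ε < |S (n - m) (T^[m] x)| := hmB (n - m) (by omega)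
        rw [hadd]; simpa using h1
      intro m hm n hn hmn
      rcases lt_or_gt_of_ne hmn with h | h
      · rw [abs_sub_comm]; exact key m n hm hn h
      · exact key n m hn hm h
    have hbd : ∀ n ∈ V, |S n x| ≤ δ * N := by
      intro n hn
      exact hg n (Finset.mem_range.1 (Finset.mem_filter.1 hn).1)
    have hcard : (V.card : ℝ) ≤ 2 * (δ * N) / ε + 2 :=
      card_separated hε (by positivity) hsep hbd
    have hFN : F N x = (V.card : ℝ) / N := by
      rw [hFapp, sum_indicator_eq_card]
    rw [Real.dist_eq, sub_zero, abs_of_nonneg (hFbound N x).1, hFN]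
    have h2 : 2 * (δ * N) / ε = (δ' / 2) * N := by
      rw [hδdef]; field_simp; ring
    have h3 : (V.card : ℝ) / N ≤ δ' / 2 + 2 / N := by
      rw [div_le_iff₀ hNpos]
      calc (V.card : ℝ) ≤ (δ' / 2) * N + 2 := by rw [← h2]; exact hcard
        _ = (δ' / 2 + 2 / N) * N := by field_simp
    have h4 : 2 / (N : ℝ) < δ' / 2 := by
      rw [div_lt_iff₀ hNpos]
      rw [div_lt_iff₀ hδ'] at hN4
      nlinarith
    linarith
  -- integrals
  have hint : ∀ N : ℕ, 1 ≤ N → ∫ x, F N x ∂μ = (μ B).toReal := by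
    intro N hN
    have hItble : ∀ n : ℕ, Integrable ((T^[n] ⁻¹' B).indicator (1 : X → ℝ)) μ :=
      fun n => (integrable_const 1).indicator ((hTm.measurable.iterate n) hB)
    have h1 : ∫ x, F N x ∂μ
        = (∑ n ∈ Finset.range N, ∫ x, (T^[n] ⁻¹' B).indicator (1 : X → ℝ) x ∂μ) / N := by
      simp only [hFapp]
      rw [integral_div, integral_finset_sum _ fun n _ => hItble n]
    have h2 : ∀ n : ℕ, ∫ x, (T^[n] ⁻¹' B).indicator (1 : X → ℝ) x ∂μ = (μ B).toReal := by
      intro n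
      rw [show ((T^[n] ⁻¹' B).indicator (1 : X → ℝ)) = ((T^[n] ⁻¹' B).indicator
        (fun _ => (1 : ℝ))) from rfl]
      rw [integral_indicator_const (1 : ℝ) ((hTm.measurable.iterate n) hB)]
      rw [measureReal_def, (hTm.iterate n).measure_preimage hB.nullMeasurableSet]
      simp
    rw [h1]
    simp only [h2, Finset.sum_const, Finset.card_range, nsmul_eq_mul]
    have hNpos : (0 : ℝ) < N := by exact_mod_cast hN
    field_simp
  have htend : Tendsto (fun N => ∫ x, F N x ∂μ) atTop (nhds 0) := by
    have := tendsto_integral_of_dominated_convergence (F := F) (f := fun _ => (0 : ℝ))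
      (fun _ => (1 : ℝ)) (fun N => (hFmeas N).aestronglyMeasurable)
      (integrable_const 1)
      (fun N => ae_of_all _ fun x => by
        rw [Real.norm_eq_abs, abs_of_nonneg (hFbound N x).1]; exact (hFbound N x).2)
      hptwise
    simpa using this
  have htend2 : Tendsto (fun N => ∫ x, F N x ∂μ) atTop (nhds ((μ B).toReal)) := by
    apply tendsto_const_nhds.congr'
    filter_upwards [eventually_ge_atTop 1] with N hN
    exact (hint N hN).symm
  have h0 : (μ B).toReal = 0 := tendsto_nhds_unique htend2 htend
  have := (ENNReal.toReal_eq_zero_iff _).1 h0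
  rcases this with h | h
  · exact h
  · exact absurd h (measure_ne_top μ B)

/-- Dekking's extension of the Chung–Fuchs theorem: if `(X,T,μ)` is ergodic with `μ` a
probability measure, `f` measurable and the Birkhoff averages `Sₙf/n → 0` a.e., then the
generalised random walk `Sₙf` is recurrent. -/
theorem dekking_recurrent
    {X : Type*} [MeasurableSpace X] (μ : Measure X) [IsProbabilityMeasure μ]
    (T : X → X) (hT : Ergodic T μ)
    (f : X → ℝ) (hf : Measurable f)
    (hlim : ∀ᵐ x ∂μ, Tendsto
      (fun n => (∑ k ∈ Finset.range n, f (T^[k] x)) / (n : ℝ)) atTop (nhds 0)) :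
    ∀ c : ℝ, 0 < c →
      ∀ᵐ x ∂μ, ∃ᶠ n in atTop, |∑ k ∈ Finset.range n, f (T^[k] x)| ≤ c := by
  intro c hc
  have hTm : MeasurePreserving T μ μ := hT.toMeasurePreserving
  set S : ℕ → X → ℝ := birkhoffSum T f with hSdef
  have hlim' : ∀ᵐ x ∂μ, Tendsto (fun n => S n x / (n : ℝ)) atTop (nhds 0) := hlim
  -- for every m j, a.e. x there is a return of T^[m] x within c/2^(j+1)
  have hP : ∀ m j : ℕ, ∀ᵐ x ∂μ,
      ∃ n, 1 ≤ n ∧ |S n (T^[m] x)| ≤ c / 2 ^ (j + 1) := by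
    intro m j
    have hε : (0 : ℝ) < c / 2 ^ (j + 1) := by positivity
    have hnull := null_no_return μ T hTm f hf hlim' hε
    have hpre : μ (T^[m] ⁻¹' {x | ∀ n, 1 ≤ n → c / 2 ^ (j + 1) < |S n x|}) = 0 := by
      have hS : ∀ n, Measurable (S n) := fun n =>
        Finset.measurable_sum _ (fun k _ => hf.comp (hTm.measurable.iterate k))
      have hB : MeasurableSet {x | ∀ n, 1 ≤ n → c / 2 ^ (j + 1) < |S n x|} := by
        have : {x | ∀ n, 1 ≤ n → c / 2 ^ (j + 1) < |S n x|}
            = ⋂ n, ⋂ _h : 1 ≤ n, {x | c / 2 ^ (j + 1) < |S n x|} := by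
          ext x; simp
        rw [this]
        exact MeasurableSet.iInter fun n => MeasurableSet.iInter fun _ =>
          measurableSet_lt measurable_const (hS n).abs
      rw [(hTm.iterate m).measure_preimage hB.nullMeasurableSet]
      exact hnull
    have hae : ∀ᵐ x ∂μ,
        x ∉ T^[m] ⁻¹' {x | ∀ n, 1 ≤ n → c / 2 ^ (j + 1) < |S n x|} :=
      measure_eq_zero_iff_ae_notMem.1 hpre
    filter_upwards [hae] with x hx
    simp only [Set.mem_preimage, Set.mem_setOf_eq] at hx
    push_neg at hx
    obtain ⟨n, hn1, hn2⟩ := hx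
    exact ⟨n, hn1, hn2⟩
  have hPall : ∀ᵐ x ∂μ, ∀ m j : ℕ,
      ∃ n, 1 ≤ n ∧ |S n (T^[m] x)| ≤ c / 2 ^ (j + 1) :=
    (ae_all_iff).2 fun m => (ae_all_iff).2 fun j => hP m j
  filter_upwards [hPall] with x hx
  -- build a strictly growing sequence of times with |S N x| ≤ c
  have key : ∀ j : ℕ, ∃ N, j + 1 ≤ N ∧ |S N x| ≤ c * (1 - (1 / 2) ^ (j + 1)) := by
    intro j
    induction j with
    | zero =>
      obtain ⟨n, hn1, hn2⟩ := hx 0 0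
      refine ⟨n, hn1, ?_⟩
      have h0 : T^[0] x = x := rfl
      rw [h0] at hn2
      calc |S n x| ≤ c / 2 ^ (0 + 1) := hn2
        _ = c * (1 - (1 / 2 : ℝ) ^ (0 + 1)) := by ring
    | succ j ih =>
      obtain ⟨N, hN1, hN2⟩ := ih
      obtain ⟨n, hn1, hn2⟩ := hx N (j + 1)
      refine ⟨N + n, by omega, ?_⟩
      have hadd : S (N + n) x = S N x + S n (T^[N] x) := birkhoffSum_add T f N n x
      have h1 : |S (N + n) x| ≤ |S N x| + |S n (T^[N] x)| := by
        rw [hadd]; exact abs_add_le _ _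
      have h2 : c / 2 ^ (j + 1 + 1) = c * (1 / 2 : ℝ) ^ (j + 2) := by
        rw [div_eq_mul_inv, ← inv_pow]; norm_num
      have h3 : c * (1 - (1 / 2 : ℝ) ^ (j + 1)) + c * (1 / 2 : ℝ) ^ (j + 2)
          = c * (1 - (1 / 2 : ℝ) ^ (j + 2)) := by ring
      calc |S (N + n) x| ≤ c * (1 - (1 / 2 : ℝ) ^ (j + 1)) + c * (1 / 2 : ℝ) ^ (j + 2) := by
            rw [← h2]; linarith
        _ = c * (1 - (1 / 2 : ℝ) ^ (j + 2)) := h3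
  rw [frequently_atTop]
  intro a
  obtain ⟨N, hN1, hN2⟩ := key a
  refine ⟨N, by omega, ?_⟩
  have hp : (0 : ℝ) ≤ (1 / 2 : ℝ) ^ (a + 1) := by positivity
  have : |S N x| ≤ c := le_trans hN2 (by nlinarith)
  exact this
end

section
/- Let (X, ℬ, T, μ) be a measure-preserving system with μ(X) = 1 and let u, v : X → [0, ∞] be measurable with v finite a.e. and u = v + u∘T μ-a.e. If μ(u < ∞) > 0, then v = 0 μ-a.e. on the T-invariant hull of {u < ∞}; in particular v = 0 μ-a.e. on {u < ∞}. -/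
open MeasureTheory Filter
open scoped ENNReal

/-- If `s` is a.e. contained in `t`, both measurable, with equal finite measures,
then `t \ s` is null. -/
lemma null_diff_of_ae_subset {X : Type*} [MeasurableSpace X] (μ : Measure X)
    {s t : Set X} (hs : MeasurableSet s) (ht : MeasurableSet t) (hsub : s ≤ᵐ[μ] t)
    (heq : μ t = μ s) (hfin : μ s ≠ ⊤) : μ (t \ s) = 0 := by
  have h1 : μ (s ∪ t) = μ t := by
    apply le_antisymm
    · calc μ (s ∪ t) ≤ μ ((s \ t) ∪ t) := measure_mono (by
        intro x hx
        rcases hx with hx | hx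
        · by_cases h : x ∈ t
          · exact Or.inr h
          · exact Or.inl ⟨hx, h⟩
        · exact Or.inr hx)
      _ ≤ μ (s \ t) + μ t := measure_union_le _ _
      _ = μ t := by rw [MeasureTheory.ae_le_set.mp hsub, zero_add]
    · exact measure_mono Set.subset_union_right
  have h2 : s ∪ (t \ s) = s ∪ t := by
    ext x; simp only [Set.mem_union, Set.mem_diff]; tauto
  have h3 : μ s + μ (t \ s) = μ s := by
    rw [← measure_union disjoint_sdiff_self_right (ht.diff hs), h2, h1, heq]
  exact (WithTop.add_left_cancel hfin (by rw [h3, add_zero] : μ s + 0 = μ s + μ (t \ s))).symm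

/-- If `f ≤ g` a.e., both measurable, and the sublevel sets have equal measures
under a finite measure, then `f = g` a.e. -/
lemma ae_eq_of_ae_le_of_sublevel {X : Type*} [MeasurableSpace X] (μ : Measure X)
    [IsFiniteMeasure μ] {f g : X → ℝ≥0∞} (hf : Measurable f) (hg : Measurable g)
    (hle : ∀ᵐ x ∂μ, f x ≤ g x)
    (hdist : ∀ c : ℝ≥0∞, μ {x | g x < c} = μ {x | f x < c}) : f =ᵐ[μ] g := by
  have key : ∀ q : ℚ, μ ({x | f x < ((q : ℝ).toNNReal : ℝ≥0∞)} \
      {x | g x < ((q : ℝ).toNNReal : ℝ≥0∞)}) = 0 := by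
    intro q
    set c : ℝ≥0∞ := ((q : ℝ).toNNReal : ℝ≥0∞)
    have hsub : {x | g x < c} ≤ᵐ[μ] {x | f x < c} := by
      filter_upwards [hle] with x hx
      intro hgx
      exact lt_of_le_of_lt hx hgx
    exact null_diff_of_ae_subset μ (measurableSet_lt hg measurable_const)
      (measurableSet_lt hf measurable_const) hsub (hdist c).symm (measure_ne_top μ _)
  have hnull : μ {x | f x < g x} = 0 := by
    refine measure_mono_null (fun x hx => ?_) (measure_iUnion_null_iff.mpr key)
    obtain ⟨q, _, h1, h2⟩ := ENNReal.lt_iff_exists_rat_btwn.mp hx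
    exact Set.mem_iUnion.mpr ⟨q, h1, not_lt.mpr h2.le⟩
  have : ∀ᵐ x ∂μ, ¬ (f x < g x) := ae_iff.mpr (by simpa using hnull)
  filter_upwards [hle, this] with x h1 h2
  exact le_antisymm h1 (not_lt.mp h2)

/-- If `u = v + u∘T` a.e. with `u, v : X → [0,∞]` measurable, `v` finite a.e., and
`μ(u < ∞) > 0`, then `v = 0` a.e. on the `T`-invariant hull of `{u < ∞}`; in particular
`v = 0` a.e. on `{u < ∞}`. -/
theorem coboundary_vanishes
    {X : Type*} [MeasurableSpace X] (μ : Measure X) [IsProbabilityMeasure μ]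
    (T : X → X) (hT : MeasurePreserving T μ μ)
    (u v : X → ℝ≥0∞) (hu : Measurable u) (hv : Measurable v)
    (hvfin : ∀ᵐ x ∂μ, v x < ⊤)
    (hcob : ∀ᵐ x ∂μ, u x = v x + u (T x))
    (hpos : 0 < μ {x | u x < ⊤}) :
    (∀ᵐ x ∂μ, (∃ n : ℕ, u (T^[n] x) < ⊤) → v x = 0) ∧
    (∀ᵐ x ∂μ, u x < ⊤ → v x = 0) := by
  -- u ∘ T ≤ u a.e.
  have hle : ∀ᵐ x ∂μ, u (T x) ≤ u x := by
    filter_upwards [hcob] with x hx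
    rw [hx]; exact le_add_self
  -- u ∘ T = u a.e.
  have heq : (fun x => u (T x)) =ᵐ[μ] u := by
    apply ae_eq_of_ae_le_of_sublevel μ (hu.comp hT.measurable) hu hle
    intro c
    exact (hT.measure_preimage (s := {y | u y < c})
      (measurableSet_lt hu measurable_const).nullMeasurableSet).symm
  -- iterate: u ∘ T^[n] = u a.e.
  have hiter : ∀ n : ℕ, ∀ᵐ x ∂μ, u (T^[n] x) = u x := by
    intro n
    induction n with
    | zero => simp
    | succ n ih =>
      have h1 : ∀ᵐ x ∂μ, u (T^[n] (T x)) = u (T x) :=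
        hT.quasiMeasurePreserving.ae ih
      filter_upwards [h1, heq] with x hx1 hx2
      rw [Function.iterate_succ_apply, hx1, hx2]
  have hall : ∀ᵐ x ∂μ, ∀ n : ℕ, u (T^[n] x) = u x := ae_all_iff.mpr hiter
  have main : ∀ᵐ x ∂μ, (∃ n : ℕ, u (T^[n] x) < ⊤) → v x = 0 := by
    filter_upwards [hall, hcob, heq] with x hx1 hx2 hx3
    rintro ⟨n, hn⟩
    have hux : u x < ⊤ := hx1 n ▸ hn
    have : v x + u x = 0 + u x := by
      calc v x + u x = v x + u (T x) := by rw [hx3]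
        _ = u x := hx2.symm
        _ = 0 + u x := (zero_add _).symm
    exact WithTop.add_right_cancel hux.ne this
  refine ⟨main, ?_⟩
  filter_upwards [main] with x hx hux
  exact hx ⟨0, by simpa using hux⟩
end

section
/- Let (X̂, ℬ̂, T̂, ℚ) be a measure-preserving probability system and F : X̂ → ℝ measurable with ℚ(limₙ ŜₙF/n = 0) = 1. Let G = limₙ max_{1 ≤ k ≤ n} Ŝ_k F ∈ (−∞, ∞]. Then ℚ-a.s. G ≥ 0, and hence G⁺ = F + G⁺∘T̂ ℚ-a.e. on {G⁺∘T̂ < ∞}. -/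
open MeasureTheory Filter Finset Function
open scoped ENNReal NNReal

namespace FillingSchemeAux

open scoped Classical

variable {X : Type*} [MeasurableSpace X]

/-- number of visits to `A` among the first `n` points of the orbit of `x`. -/
noncomputable def visits (T : X → X) (A : Set X) (x : X) (n : ℕ) : ℕ :=
  ((Finset.range n).filter (fun k => T^[k] x ∈ A)).card

lemma visits_succ (T : X → X) (A : Set X) (x : X) (n : ℕ) :
    visits T A x (n + 1) = visits T A (T x) n + (if x ∈ A then 1 else 0) := by
  simp only [visits, Finset.card_filter]
  rw [Finset.sum_range_succ']
  simp [Function.iterate_succ_apply]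
  rw [Finset.card_filter]
  convert rfl
  all_goals split_ifs <;> simp_all

lemma visits_succ_le (T : X → X) (A : Set X) (x : X) (n : ℕ) :
    visits T A x (n + 1) ≤ visits T A x n + 1 := by
  simp only [visits, Finset.range_add_one, Finset.filter_insert]
  split
  · exact Finset.card_insert_le _ _
  · exact Nat.le_succ _

lemma visits_mono (T : X → X) (A : Set X) (x : X) (n : ℕ) :
    visits T A x n ≤ visits T A x (n + 1) :=
  Finset.card_le_card (Finset.filter_subset_filter _ (by
    intro k hk; simp only [Finset.mem_range] at *; omega))

lemma measurable_visits_cast {T : X → X} (hT : Measurable T) {A : Set X}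
    (hA : MeasurableSet A) (n : ℕ) :
    Measurable (fun x => (visits T A x n : ℝ)) := by
  have : (fun x => (visits T A x n : ℝ))
      = fun x => ∑ k ∈ Finset.range n, (if T^[k] x ∈ A then (1:ℝ) else 0) := by
    funext x
    rw [visits, Finset.card_filter]
    push_cast
    rfl
  rw [this]
  exact Finset.measurable_sum _ fun k _ =>
    Measurable.ite ((hT.iterate k) hA) measurable_const measurable_const

/-- The key combinatorial estimate: if every point of `A` has all Birkhoff sums `≤ -δ`,
then for `x ∈ A` the `n`-th Birkhoff sum is at most `-δ` times the number of visits to `A`. -/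
lemma sum_le_of_forever_neg {T : X → X} {F : X → ℝ} {δ : ℝ} (hδ : 0 < δ)
    {A : Set X} (hA : ∀ y ∈ A, ∀ k, 1 ≤ k → birkhoffSum T F k y ≤ -δ)
    {x : X} (hx : x ∈ A) (n : ℕ) :
    birkhoffSum T F n x ≤ -δ * (visits T A x n : ℝ) := by
  induction n using Nat.strong_induction_on with
  | _ n ih =>
    rcases Nat.eq_zero_or_pos n with rfl | hn
    · simp [visits]
    · set V := (Finset.range n).filter (fun k => T^[k] x ∈ A) with hV
      have h0 : (0:ℕ) ∈ V := by
        simp only [hV, Finset.mem_filter, Finset.mem_range]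
        exact ⟨hn, by simpa using hx⟩
      have hne : V.Nonempty := ⟨0, h0⟩
      set j := V.max' hne with hj
      have hjV : j ∈ V := V.max'_mem hne
      have hjn : j < n := Finset.mem_range.1 (Finset.mem_filter.1 hjV).1
      have hjA : T^[j] x ∈ A := (Finset.mem_filter.1 hjV).2
      have hsplit : birkhoffSum T F n x
          = birkhoffSum T F j x + birkhoffSum T F (n - j) (T^[j] x) := by
        rw [← birkhoffSum_add]
        congr 1
        omega
      have hcard : visits T A x n = visits T A x j + 1 := by
        have hVeq : V = insert j ((Finset.range j).filter (fun k => T^[k] x ∈ A)) := by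
          ext k
          simp only [hV, Finset.mem_filter, Finset.mem_range, Finset.mem_insert]
          constructor
          · rintro ⟨hk, hkA⟩
            have hkj : k ≤ j :=
              V.le_max' k (Finset.mem_filter.2 ⟨Finset.mem_range.2 hk, hkA⟩)
            rcases eq_or_lt_of_le hkj with h | h
            · exact Or.inl h
            · exact Or.inr ⟨h, hkA⟩
          · rintro (rfl | ⟨hk, hkA⟩)
            · exact ⟨hjn, hjA⟩
            · exact ⟨hk.trans hjn, hkA⟩
        rw [visits, ← hV, hVeq, Finset.card_insert_of_notMem (by simp), visits]
      have h1 : birkhoffSum T F j x ≤ -δ * (visits T A x j : ℝ) := ih j hjn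
      have h2 : birkhoffSum T F (n - j) (T^[j] x) ≤ -δ := hA _ hjA _ (by omega)
      rw [hsplit, hcard]
      push_cast
      linarith

/-- squeeze helper. -/
lemma tendsto_div_of_le {u v : ℕ → ℕ} (h : ∀ n, u n ≤ v n + 1)
    (hv : Tendsto (fun n => (v n : ℝ) / n) atTop (nhds 0)) :
    Tendsto (fun n => (u n : ℝ) / n) atTop (nhds 0) := by
  have h0 : Tendsto (fun n : ℕ => (v n : ℝ) / n + 1 / n) atTop (nhds 0) := by
    have := hv.add tendsto_one_div_atTop_nhds_zero_nat
    simpa using this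
  refine squeeze_zero (fun n => by positivity) (fun n => ?_) h0
  rcases Nat.eq_zero_or_pos n with rfl | hn
  · simp
  · have hn' : (0:ℝ) < n := by exact_mod_cast hn
    rw [← add_div]
    exact div_le_div_of_nonneg_right (by exact_mod_cast h n) hn'.le

/-- The set where the visit frequency tends to zero is invariant. -/
lemma mem_freq_zero_iff (T : X → X) (A : Set X) (x : X) :
    Tendsto (fun n => (visits T A x n : ℝ) / n) atTop (nhds 0)
      ↔ Tendsto (fun n => (visits T A (T x) n : ℝ) / n) atTop (nhds 0) := by
  constructor
  · intro hx
    refine tendsto_div_of_le (fun n => ?_) hx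
    have h1 := visits_succ T A x n
    have h2 := visits_succ_le T A x n
    split at h1 <;> omega
  · intro hx
    refine tendsto_div_of_le (fun n => ?_) hx
    have h1 := visits_succ T A x n
    have h2 := visits_mono T A x n
    split at h1 <;> omega

lemma null_visits_freq {Q : Measure X} [IsProbabilityMeasure Q]
    {T : X → X} (hT : MeasurePreserving T Q Q)
    {A : Set X} (hA : MeasurableSet A) :
    Q (A ∩ {x | Tendsto (fun n => (visits T A x n : ℝ) / n) atTop (nhds 0)}) = 0 := by
  set B : Set X := {x | Tendsto (fun n => (visits T A x n : ℝ) / n) atTop (nhds 0)} with hB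
  have hBmeas : MeasurableSet B := by
    apply measurableSet_tendsto (nhds (0:ℝ))
    intro n
    exact (measurable_visits_cast hT.measurable hA n).div_const _
  have hBpre : ∀ k : ℕ, T^[k] ⁻¹' B = B := by
    intro k
    induction k with
    | zero => simp
    | succ k ihk =>
      rw [Function.iterate_succ, Set.preimage_comp, ihk]
      ext x
      simp only [Set.mem_preimage, hB, Set.mem_setOf_eq]
      exact (mem_freq_zero_iff T A x).symm
  have hvis : ∀ n : ℕ, ∀ x : X, (visits T A x n : ℝ≥0∞)
      = ∑ k ∈ Finset.range n, (T^[k] ⁻¹' A).indicator (1 : X → ℝ≥0∞) x := by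
    intro n x
    rw [visits, Finset.card_filter]
    push_cast
    refine Finset.sum_congr rfl fun k _ => ?_
    rw [Set.indicator_apply]
    simp only [Set.mem_preimage]
    rfl
  have key : ∀ n : ℕ, ∫⁻ x in B, (visits T A x n : ℝ≥0∞) ∂Q = n * Q (A ∩ B) := by
    intro n
    calc ∫⁻ x in B, (visits T A x n : ℝ≥0∞) ∂Q
        = ∫⁻ x in B, ∑ k ∈ Finset.range n,
            (T^[k] ⁻¹' A).indicator (1 : X → ℝ≥0∞) x ∂Q := by
          simp_rw [hvis]
      _ = ∑ k ∈ Finset.range n, ∫⁻ x in B,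
            (T^[k] ⁻¹' A).indicator (1 : X → ℝ≥0∞) x ∂Q := by
          refine lintegral_finset_sum _ fun k _ => ?_
          exact measurable_const.indicator ((hT.measurable.iterate k) hA)
      _ = ∑ k ∈ Finset.range n, Q (A ∩ B) := by
          refine Finset.sum_congr rfl fun k _ => ?_
          have hAk : MeasurableSet (T^[k] ⁻¹' A) := (hT.measurable.iterate k) hA
          rw [lintegral_indicator_one hAk, Measure.restrict_apply hAk]
          have : T^[k] ⁻¹' A ∩ B = T^[k] ⁻¹' (A ∩ B) := by
            rw [Set.preimage_inter, hBpre k]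
          rw [this]
          exact (hT.iterate k).measure_preimage (hA.inter hBmeas).nullMeasurableSet
      _ = n * Q (A ∩ B) := by simp [Finset.sum_const]
  have hmeasv : ∀ n : ℕ, Measurable fun x => (visits T A x n : ℝ≥0∞) / n := by
    intro n
    apply Measurable.div_const
    simp_rw [hvis n]
    exact Finset.measurable_sum _ fun k _ =>
      measurable_const.indicator ((hT.measurable.iterate k) hA)
  have hDCT : Tendsto (fun n => ∫⁻ x in B, (visits T A x n : ℝ≥0∞) / n ∂Q) atTop
      (nhds (∫⁻ _ in B, (0:ℝ≥0∞) ∂Q)) := by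
    refine tendsto_lintegral_of_dominated_convergence (fun _ => 1)
      (fun n => hmeasv n) (fun n => ?_) (by simp [measure_ne_top]) ?_
    · refine Eventually.of_forall fun x => ?_
      refine ENNReal.div_le_of_le_mul ?_
      rw [one_mul]
      have : visits T A x n ≤ n := by
        rw [visits]
        exact (Finset.card_filter_le _ _).trans (by simp)
      exact_mod_cast this
    · filter_upwards [ae_restrict_mem hBmeas] with x hx
      have hx' : Tendsto (fun n => (visits T A x n : ℝ) / n) atTop (nhds 0) := hx
      have h1 : Tendsto (fun n => ENNReal.ofReal ((visits T A x n : ℝ) / n)) atTop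
          (nhds 0) := by simpa using ENNReal.tendsto_ofReal hx'
      refine Tendsto.congr' ?_ h1
      filter_upwards [eventually_ge_atTop 1] with n hn
      rw [ENNReal.ofReal_div_of_pos (by exact_mod_cast hn), ENNReal.ofReal_natCast,
        ENNReal.ofReal_natCast]
  have hconst : Tendsto (fun n => ∫⁻ x in B, (visits T A x n : ℝ≥0∞) / n ∂Q) atTop
      (nhds (Q (A ∩ B))) := by
    refine tendsto_const_nhds.congr' ?_
    filter_upwards [eventually_ge_atTop 1] with n hn
    have hn0 : (n : ℝ≥0∞) ≠ 0 := Nat.cast_ne_zero.2 (by omega)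
    simp only [div_eq_mul_inv]
    rw [lintegral_mul_const _ (by
      simp_rw [hvis n]
      exact Finset.measurable_sum _ fun k _ =>
        measurable_const.indicator ((hT.measurable.iterate k) hA)), key n]
    rw [mul_comm (n : ℝ≥0∞) _, mul_assoc, ENNReal.mul_inv_cancel hn0 (by simp), mul_one]
  have := tendsto_nhds_unique hconst hDCT
  simpa using this

/-- main null-set lemma: the set of points whose Birkhoff sums stay `≤ -δ` forever
while the averages tend to `0` is null. -/
lemma null_forever_neg {Q : Measure X} [IsProbabilityMeasure Q]
    {T : X → X} (hT : MeasurePreserving T Q Q)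
    {F : X → ℝ} (hF : Measurable F) {δ : ℝ} (hδ : 0 < δ) :
    Q {x | (∀ k, 1 ≤ k → birkhoffSum T F k x ≤ -δ) ∧
        Tendsto (fun n => birkhoffSum T F n x / n) atTop (nhds 0)} = 0 := by
  set A : Set X := {x | ∀ k, 1 ≤ k → birkhoffSum T F k x ≤ -δ} with hAdef
  have hAmeas : MeasurableSet A := by
    have : A = ⋂ k : ℕ, ⋂ _ : 1 ≤ k, {x | birkhoffSum T F k x ≤ -δ} := by
      ext x; simp [hAdef]
    rw [this]
    refine MeasurableSet.iInter fun k => MeasurableSet.iInter fun _ => ?_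
    have hmeas : Measurable fun x => birkhoffSum T F k x :=
      Finset.measurable_sum _ fun i _ => hF.comp (hT.measurable.iterate i)
    exact measurableSet_le hmeas measurable_const
  have hsub : {x | (∀ k, 1 ≤ k → birkhoffSum T F k x ≤ -δ) ∧
      Tendsto (fun n => birkhoffSum T F n x / n) atTop (nhds 0)}
      ⊆ A ∩ {x | Tendsto (fun n => (visits T A x n : ℝ) / n) atTop (nhds 0)} := by
    rintro x ⟨hxA, hxL⟩
    refine ⟨hxA, ?_⟩
    have hg : Tendsto (fun n => -(birkhoffSum T F n x / n) / δ) atTop (nhds 0) := by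
      have := (hxL.neg).div_const δ
      simpa using this
    refine squeeze_zero (fun n => by positivity) (fun n => ?_) hg
    rcases Nat.eq_zero_or_pos n with rfl | hn
    · simp [visits]
    · have hn' : (0:ℝ) < n := by exact_mod_cast hn
      have hkey := sum_le_of_forever_neg (A := A) hδ (fun y hy k hk => hy k hk) hxA n
      have h1 : (visits T A x n : ℝ) ≤ -birkhoffSum T F n x / δ := by
        rw [le_div_iff₀ hδ]
        linarith
      calc (visits T A x n : ℝ) / n ≤ (-birkhoffSum T F n x / δ) / n :=
            div_le_div_of_nonneg_right h1 hn'.le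
        _ = -(birkhoffSum T F n x / n) / δ := by
            rw [div_right_comm, neg_div]
  exact measure_mono_null hsub (null_visits_freq hT hAmeas)


lemma coe_add_iSup (c : ℝ) (a : ℕ → ℝ) :
    (⨆ j, ((c + a j : ℝ) : EReal)) = (c : EReal) + ⨆ j, ((a j : ℝ) : EReal) := by
  apply le_antisymm
  · refine iSup_le fun j => ?_
    rw [EReal.coe_add]
    exact add_le_add le_rfl (le_iSup (fun j => ((a j : ℝ) : EReal)) j)
  · have hs : (⨆ j, ((a j : ℝ) : EReal))
        ≤ ((-c : ℝ) : EReal) + ⨆ j, ((c + a j : ℝ) : EReal) := by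
      refine iSup_le fun j => ?_
      calc ((a j : ℝ) : EReal) = ((-c : ℝ) : EReal) + ((c + a j : ℝ) : EReal) := by
            rw [← EReal.coe_add]; norm_num
        _ ≤ _ := add_le_add le_rfl (le_iSup (fun j => ((c + a j : ℝ) : EReal)) j)
    have hne : (⨆ j, ((c + a j : ℝ) : EReal)) ≠ ⊥ := by
      refine ne_of_gt (lt_of_lt_of_le ?_ (le_iSup (fun j => ((c + a j : ℝ) : EReal)) 0))
      exact EReal.bot_lt_coe _
    generalize hu : (⨆ j, ((c + a j : ℝ) : EReal)) = u at hs hne ⊢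
    induction u using EReal.rec with
    | bot => exact absurd rfl hne
    | coe r =>
      have hs' : (⨆ j, ((a j : ℝ) : EReal)) ≤ ((-c + r : ℝ) : EReal) := by
        rw [EReal.coe_add]; exact hs
      calc (c : EReal) + ⨆ j, ((a j : ℝ) : EReal)
          ≤ (c : EReal) + ((-c + r : ℝ) : EReal) := add_le_add le_rfl hs'
        _ = (r : EReal) := by rw [← EReal.coe_add]; norm_num
    | top => exact le_top

end FillingSchemeAux

open FillingSchemeAux

/-- If the Birkhoff averages of `F` tend to `0` a.e., then the limit
`G = limₙ max_{1 ≤ k ≤ n} Ŝ_k F` satisfies `G ≥ 0` a.e., and hence the filling-scheme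
identity simplifies to `G⁺ = F + G⁺∘T̂` a.e. on `{G⁺∘T̂ < ∞}`. -/
theorem filling_scheme_nonneg
    {X : Type*} [MeasurableSpace X] (Q : Measure X) [IsProbabilityMeasure Q]
    (T : X → X) (hT : MeasurePreserving T Q Q)
    (F : X → ℝ) (hF : Measurable F)
    (hlim : ∀ᵐ x ∂Q, Tendsto
      (fun n => (∑ k ∈ Finset.range n, F (T^[k] x)) / (n : ℝ)) atTop (nhds 0))
    (G : X → EReal)
    (hG : ∀ x, G x = ⨆ k : ℕ, ⨆ _ : 1 ≤ k,
      ((∑ i ∈ Finset.range k, F (T^[i] x) : ℝ) : EReal)) :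
    ∀ᵐ x ∂Q, 0 ≤ G x ∧
      (G (T x) ⊔ 0 < ⊤ → G x ⊔ 0 = (F x : EReal) + (G (T x) ⊔ 0)) := by
  -- birkhoffSum is definitionally the partial sum
  have hbs : ∀ (n : ℕ) (x : X), birkhoffSum T F n x = ∑ i ∈ Finset.range n, F (T^[i] x) :=
    fun n x => rfl
  -- deterministic identity : G x = F x + (G (T x) ⊔ 0)
  have hdet : ∀ x : X, G x = (F x : EReal) + (G (T x) ⊔ 0) := by
    intro x
    have hGTx : G (T x) ⊔ 0 = ⨆ j : ℕ, ((birkhoffSum T F j (T x) : ℝ) : EReal) := by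
      apply le_antisymm
      · apply sup_le
        · rw [hG (T x)]
          exact iSup₂_le fun k _ => le_iSup (fun j => ((birkhoffSum T F j (T x) : ℝ) : EReal)) k
        · have h0 : ((birkhoffSum T F 0 (T x) : ℝ) : EReal) = 0 := by
            simp [birkhoffSum]
          rw [← h0]
          exact le_iSup (fun j => ((birkhoffSum T F j (T x) : ℝ) : EReal)) 0
      · refine iSup_le fun j => ?_
        cases j with
        | zero => simp [birkhoffSum]
        | succ j =>
          refine le_sup_of_le_left ?_
          rw [hG (T x)]
          exact le_iSup₂ (f := fun k (_ : 1 ≤ k) =>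
            ((∑ i ∈ Finset.range k, F (T^[i] (T x)) : ℝ) : EReal)) (j+1) (Nat.succ_le_succ (Nat.zero_le j))
    have hGx : G x = ⨆ j : ℕ, ((F x + birkhoffSum T F j (T x) : ℝ) : EReal) := by
      rw [hG x]
      apply le_antisymm
      · refine iSup₂_le fun k hk => ?_
        obtain ⟨j, rfl⟩ : ∃ j, k = j + 1 := ⟨k - 1, by omega⟩
        have : (∑ i ∈ Finset.range (j+1), F (T^[i] x) : ℝ)
            = F x + birkhoffSum T F j (T x) := birkhoffSum_succ' T F j x
        rw [this]
        exact le_iSup (fun j => ((F x + birkhoffSum T F j (T x) : ℝ) : EReal)) j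
      · refine iSup_le fun j => ?_
        have : (F x + birkhoffSum T F j (T x) : ℝ)
            = ∑ i ∈ Finset.range (j+1), F (T^[i] x) := (birkhoffSum_succ' T F j x).symm
        rw [this]
        exact le_iSup₂ (f := fun k (_ : 1 ≤ k) =>
          ((∑ i ∈ Finset.range k, F (T^[i] x) : ℝ) : EReal)) (j+1) (Nat.succ_le_succ (Nat.zero_le j))
    rw [hGx, hGTx, coe_add_iSup (F x) (fun j => birkhoffSum T F j (T x))]
  -- the a.e. nonnegativity
  have hnull : ∀ m : ℕ, Q {x | (∀ k, 1 ≤ k → birkhoffSum T F k x ≤ -(1/(m+1 : ℝ))) ∧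
      Tendsto (fun n => birkhoffSum T F n x / n) atTop (nhds 0)} = 0 := by
    intro m
    exact null_forever_neg hT hF (by positivity)
  have hae : ∀ᵐ x ∂Q, ∀ m : ℕ, ¬((∀ k, 1 ≤ k → birkhoffSum T F k x ≤ -(1/(m+1 : ℝ))) ∧
      Tendsto (fun n => birkhoffSum T F n x / n) atTop (nhds 0)) := by
    rw [ae_all_iff]
    intro m
    exact (ae_iff.2 (by simpa using hnull m))
  filter_upwards [hlim, hae] with x hx hbad
  have hGnonneg : 0 ≤ G x := by
    by_contra hcon
    have hlt : G x < 0 := lt_of_not_ge hcon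
    have hne_top : G x ≠ ⊤ := hlt.ne_top
    have hne_bot : G x ≠ ⊥ := by
      have h1 : ((birkhoffSum T F 1 x : ℝ) : EReal) ≤ G x := by
        rw [hG x]
        exact le_iSup₂ (f := fun k (_ : 1 ≤ k) =>
          ((∑ i ∈ Finset.range k, F (T^[i] x) : ℝ) : EReal)) 1 le_rfl
      exact fun h => by simp [h] at h1
    set ρ : ℝ := (G x).toReal with hρ
    have hGeq : G x = (ρ : EReal) := (EReal.coe_toReal hne_top hne_bot).symm
    have hρneg : ρ < 0 := by
      have := hlt
      rw [hGeq] at this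
      exact_mod_cast this
    obtain ⟨m, hm⟩ := exists_nat_one_div_lt (neg_pos.2 hρneg)
    refine hbad m ⟨fun k hk => ?_, hx⟩
    have hle : ((birkhoffSum T F k x : ℝ) : EReal) ≤ G x := by
      rw [hG x]
      exact le_iSup₂ (f := fun k (_ : 1 ≤ k) =>
        ((∑ i ∈ Finset.range k, F (T^[i] x) : ℝ) : EReal)) k hk
    rw [hGeq] at hle
    have hle' : birkhoffSum T F k x ≤ ρ := by exact_mod_cast hle
    have : (1:ℝ)/(m+1) < -ρ := hm
    linarith
  refine ⟨hGnonneg, fun _ => ?_⟩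
  rw [sup_of_le_left hGnonneg]
  exact hdet x
end
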